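/- arXiv:2209.15505 — 3 statements merged into one kernel-verified Lean document; each statement's English description precedes it below -/
import Mathlib

section
/- (Descent Lemma) Under the lower-bound, mixing, smoothness, and bounded-variance assumptions, if the step size satisfies η ≤ (1−β)/(4L), then for every round r ≥ 0 the Momentum Tracking iterates satisfy E f(z̄^{(r+1)}) ≤ E f(z̄^{(r)}) + (L²η/(1−β)) E‖x̄^{(r)} − z̄^{(r)}‖² + (L²η/(1−β)) Ξ^{(r)} − (η/(4(1−β))) E‖(1/N)∑_{i=1}^N ∇f_i(x_i^{(r)})‖² − (η/(4(1−β))) E‖∇f(x̄^{(r)})‖² + Lσ²η²/(2N(1−β)²). -/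
open MeasureTheory
open scoped BigOperators

noncomputable section

/-- Problem data and standing assumptions (lower bound, mixing, smoothness) for
decentralized optimization over `N` nodes in `ℝ^d`. -/
structure MTProblem (N d : ℕ) (Ω : Type) [mΩ : MeasurableSpace Ω] where
  /-- Probability measure driving the stochastic gradients. -/
  μ : Measure Ω
  prob : IsProbabilityMeasure μ
  fstar : ℝ
  L : ℝ
  σ : ℝ
  p : ℝ
  β : ℝ
  /-- Local objectives `f_i`. -/
  f : Fin N → EuclideanSpace ℝ (Fin d) → ℝ
  /-- Local gradients `∇f_i`. -/
  g : Fin N → EuclideanSpace ℝ (Fin d) → EuclideanSpace ℝ (Fin d)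
  /-- Mixing matrix. -/
  W : Fin N → Fin N → ℝ
  /-- Common initial parameter. -/
  x0 : EuclideanSpace ℝ (Fin d)
  hN : 0 < N
  hβ0 : 0 ≤ β
  hβ1 : β < 1
  hL : 0 < L
  hp0 : 0 < p
  hp1 : p ≤ 1
  hgrad : ∀ i v, HasGradientAt (f i) (g i v) v
  /-- Lower bound: `f⋆ ≤ f(x)` for all `x`. -/
  hlb : ∀ v, fstar ≤ (N : ℝ)⁻¹ * ∑ i, f i v
  /-- `L`-smoothness of each `f_i`. -/
  hsmooth : ∀ i v w, ‖g i v - g i w‖ ≤ L * ‖v - w‖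
  hWsymm : ∀ i j, W i j = W j i
  hWrow : ∀ i, ∑ j, W i j = 1
  hWcol : ∀ j, ∑ i, W i j = 1
  /-- Spectral gap: `‖XW − X̄‖_F² ≤ (1−p)‖X − X̄‖_F²`. -/
  hmix : ∀ X : Fin N → EuclideanSpace ℝ (Fin d),
    ∑ j, ‖(∑ i, W i j • X i) - (N : ℝ)⁻¹ • ∑ i, X i‖ ^ 2
      ≤ (1 - p) * ∑ j, ‖X j - (N : ℝ)⁻¹ • ∑ i, X i‖ ^ 2

namespace MTProblem

variable {N d : ℕ} {Ω : Type} [mΩ : MeasurableSpace Ω]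

/-- Global objective `f = (1/N) ∑_i f_i`. -/
def F (P : MTProblem N d Ω) (v : EuclideanSpace ℝ (Fin d)) : ℝ :=
  (N : ℝ)⁻¹ * ∑ i, P.f i v

/-- Gradient of the global objective, `∇f = (1/N) ∑_i ∇f_i`. -/
def gradF (P : MTProblem N d Ω) (v : EuclideanSpace ℝ (Fin d)) : EuclideanSpace ℝ (Fin d) :=
  (N : ℝ)⁻¹ • ∑ i, P.g i v

end MTProblem

/-- A run of the Momentum Tracking algorithm: trajectories `x, u, c`, realized
stochastic gradients `G r i = ∇F_i(x_i^{(r)}; ξ_i^{(r)})`, together with the update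
rules, the standard initialization, and the stochastic-gradient assumptions
(unbiasedness, bounded variance, independence across nodes and rounds in the form
of orthogonality of the noises). -/
structure MTRun {N d : ℕ} {Ω : Type} [mΩ : MeasurableSpace Ω] (P : MTProblem N d Ω) where
  /-- Step size. -/
  η : ℝ
  hη : 0 < η
  x : ℕ → Fin N → Ω → EuclideanSpace ℝ (Fin d)
  u : ℕ → Fin N → Ω → EuclideanSpace ℝ (Fin d)
  c : ℕ → Fin N → Ω → EuclideanSpace ℝ (Fin d)
  G : ℕ → Fin N → Ω → EuclideanSpace ℝ (Fin d)
  /-- Filtration of the information available at each round. -/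
  ℱ : MeasureTheory.Filtration ℕ mΩ
  hx0 : ∀ i, x 0 i = fun _ => P.x0
  hu0 : ∀ i ω, u 0 i ω = (1 - P.β)⁻¹ • (G 0 i ω - (N : ℝ)⁻¹ • ∑ j, G 0 j ω)
  hc0 : ∀ i, c 0 i = u 0 i
  hu : ∀ r i ω, u (r + 1) i ω = P.β • u r i ω + G r i ω
  hx : ∀ r i ω, x (r + 1) i ω
      = (∑ j, P.W i j • x r j ω) - η • (u (r + 1) i ω - c r i ω)
  hc : ∀ r i ω, c (r + 1) i ω
      = (∑ j, P.W i j • (c r j ω - u (r + 1) j ω)) + u (r + 1) i ω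
  hmeas : ∀ r i, MemLp (G r i) 2 P.μ
  hadapted_x : ∀ r i, StronglyMeasurable[ℱ r] (x r i)
  hadapted_G : ∀ r i, StronglyMeasurable[ℱ (r + 1)] (G r i)
  /-- Unbiasedness: `E[∇F_i(x_i^{(r)};ξ) | ℱ_r] = ∇f_i(x_i^{(r)})`. -/
  hunbiased : ∀ r i,
    MeasureTheory.condExp (ℱ r) P.μ (G r i) =ᵐ[P.μ] fun ω => P.g i (x r i ω)
  /-- Bounded variance. -/
  hvar : ∀ r i, ∫ ω, ‖G r i ω - P.g i (x r i ω)‖ ^ 2 ∂P.μ ≤ P.σ ^ 2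
  /-- Independence across nodes and rounds (orthogonality of the noises). -/
  horth : ∀ r s : ℕ, ∀ i j : Fin N, (r, i) ≠ (s, j) →
    ∫ ω, (inner ℝ (G r i ω - P.g i (x r i ω)) (G s j ω - P.g j (x s j ω)) : ℝ) ∂P.μ = 0

namespace MTRun

variable {N d : ℕ} {Ω : Type} [mΩ : MeasurableSpace Ω] {P : MTProblem N d Ω}

/-- Node-average of the parameters, `x̄^{(r)}`. -/
def xbar (S : MTRun P) (r : ℕ) (ω : Ω) : EuclideanSpace ℝ (Fin d) :=
  (N : ℝ)⁻¹ • ∑ i, S.x r i ω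

/-- Node-average of the momenta, `ū^{(r)}`. -/
def ubar (S : MTRun P) (r : ℕ) (ω : Ω) : EuclideanSpace ℝ (Fin d) :=
  (N : ℝ)⁻¹ • ∑ i, S.u r i ω

/-- Node-average of the correction variables, `c̄^{(r)}`. -/
def cbar (S : MTRun P) (r : ℕ) (ω : Ω) : EuclideanSpace ℝ (Fin d) :=
  (N : ℝ)⁻¹ • ∑ i, S.c r i ω

/-- Auxiliary average `z̄^{(r)}`. -/
def zbar (S : MTRun P) : ℕ → Ω → EuclideanSpace ℝ (Fin d)
  | 0 => S.xbar 0
  | r + 1 => fun ω =>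
      (1 - P.β)⁻¹ • S.xbar (r + 1) ω - (P.β * (1 - P.β)⁻¹) • S.xbar r ω

/-- Auxiliary sequence `d_i^{(r)}`. -/
def dseq (S : MTRun P) : ℕ → Fin N → Ω → EuclideanSpace ℝ (Fin d)
  | 0 => fun i ω => (1 - P.β)⁻¹ • (P.g i (S.xbar 0 ω) - P.gradF (S.xbar 0 ω))
  | r + 1 => fun i ω => P.β • dseq S r i ω + P.g i (S.xbar r ω)

/-- Auxiliary sequence `e_i^{(r)}`. -/
def eseq (S : MTRun P) : ℕ → Fin N → Ω → EuclideanSpace ℝ (Fin d)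
  | 0 => fun _ _ => 0
  | r + 1 => fun i ω => P.β • eseq S r i ω + P.gradF (S.xbar r ω)

/-- Node-average `d̄^{(r)}`. -/
def dbar (S : MTRun P) (r : ℕ) (ω : Ω) : EuclideanSpace ℝ (Fin d) :=
  (N : ℝ)⁻¹ • ∑ i, S.dseq r i ω

/-- Node-average `ē^{(r)}`. -/
def ebar (S : MTRun P) (r : ℕ) (ω : Ω) : EuclideanSpace ℝ (Fin d) :=
  (N : ℝ)⁻¹ • ∑ i, S.eseq r i ω

/-- Consensus distance `Ξ^{(r)} = (1/N) E‖X^{(r)} − X̄^{(r)}‖_F²`. -/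
def Xi (S : MTRun P) (r : ℕ) : ℝ :=
  (N : ℝ)⁻¹ * ∫ ω, (∑ i, ‖S.x r i ω - S.xbar r ω‖ ^ 2) ∂P.μ

/-- Tracking error `ℰ^{(r)} = (1/N) E‖D^{(r+1)} − C^{(r)} − E^{(r+1)}‖_F²`. -/
def EE (S : MTRun P) (r : ℕ) : ℝ :=
  (N : ℝ)⁻¹ *
    ∫ ω, (∑ i, ‖S.dseq (r + 1) i ω - S.c r i ω - S.eseq (r + 1) i ω‖ ^ 2) ∂P.μ

/-- Momentum drift `𝒟^{(r)} = (1/N) E‖D^{(r+1)} − D^{(r)} − E^{(r+1)} + E^{(r)}‖_F²`. -/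
def DD (S : MTRun P) (r : ℕ) : ℝ :=
  (N : ℝ)⁻¹ *
    ∫ ω, (∑ i,
      ‖S.dseq (r + 1) i ω - S.dseq r i ω - S.eseq (r + 1) i ω + S.eseq r i ω‖ ^ 2) ∂P.μ

end MTRun

set_option linter.unusedSectionVars false
section H1

variable {Ω : Type*} [mΩ : MeasurableSpace Ω] {μ : Measure Ω}
variable {F : Type*} [NormedAddCommGroup F] [InnerProductSpace ℝ F]

lemma my_integrable_inner {f g : Ω → F} (hf : MemLp f 2 μ) (hg : MemLp g 2 μ) :
    Integrable (fun ω => (inner ℝ (f ω) (g ω) : ℝ)) μ := by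
  have hm : AEStronglyMeasurable (fun ω => (inner ℝ (f ω) (g ω) : ℝ)) μ :=
    hf.aestronglyMeasurable.inner hg.aestronglyMeasurable
  have hf2 : Integrable (fun ω => ‖f ω‖ ^ 2) μ := by
    have := hf.integrable_norm_rpow two_ne_zero ENNReal.ofNat_ne_top
    simpa [ENNReal.toReal_ofNat, Real.rpow_natCast] using this
  have hg2 : Integrable (fun ω => ‖g ω‖ ^ 2) μ := by
    have := hg.integrable_norm_rpow two_ne_zero ENNReal.ofNat_ne_top
    simpa [ENNReal.toReal_ofNat, Real.rpow_natCast] using this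
  refine Integrable.mono' ((hf2.add hg2).const_mul (1/2 : ℝ)) hm ?_
  filter_upwards with ω
  have h1 : |(inner ℝ (f ω) (g ω) : ℝ)| ≤ ‖f ω‖ * ‖g ω‖ := abs_real_inner_le_norm _ _
  have h2 : ‖f ω‖ * ‖g ω‖ ≤ (‖f ω‖ ^ 2 + ‖g ω‖ ^ 2) / 2 := by nlinarith [sq_nonneg (‖f ω‖ - ‖g ω‖)]
  simpa [Real.norm_eq_abs, mul_comm] using h1.trans (by linarith)

lemma my_memLp_smul {f : Ω → F} (hf : MemLp f 2 μ) (c : ℝ) :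
    MemLp (fun ω => c • f ω) 2 μ := hf.const_smul c

lemma my_sm_smul {m : MeasurableSpace Ω} {f : Ω → F} (hf : StronglyMeasurable[m] f) (c : ℝ) :
    StronglyMeasurable[m] (fun ω => c • f ω) := hf.const_smul c

lemma my_integrable_normsq {f : Ω → F} (hf : MemLp f 2 μ) :
    Integrable (fun ω => ‖f ω‖ ^ 2) μ := by
  have := my_integrable_inner hf hf
  simpa [real_inner_self_eq_norm_sq] using this

lemma my_memLp_linear_growth {f : Ω → F} {G : Type*} [NormedAddCommGroup G]
    {v : Ω → G} (hmeas : AEStronglyMeasurable f μ) (hv : MemLp v 2 μ)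
    {C L : ℝ} (hC : 0 ≤ C) (hL : 0 ≤ L) (hb : ∀ ω, ‖f ω‖ ≤ C + L * ‖v ω‖)
    [IsFiniteMeasure μ] : MemLp f 2 μ := by
  have hbd : MemLp (fun ω => C + L * ‖v ω‖) 2 μ :=
    (memLp_const C).add ((hv.norm.const_mul L))
  refine hbd.mono hmeas ?_
  filter_upwards with ω
  have : 0 ≤ C + L * ‖v ω‖ := by positivity
  simpa [Real.norm_eq_abs, abs_of_nonneg this] using hb ω

end H1
section H2
set_option linter.unusedSectionVars false

variable {F : Type*} [NormedAddCommGroup F] [InnerProductSpace ℝ F] [CompleteSpace F]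

/-- Quadratic upper bound for functions with Lipschitz gradient. -/
lemma my_quad_bound (f : F → ℝ) (g : F → F) {L : ℝ} (hL : 0 ≤ L)
    (hg : ∀ v, HasGradientAt f (g v) v) (hLip : ∀ v w, ‖g v - g w‖ ≤ L * ‖v - w‖)
    (x y : F) :
    f y ≤ f x + (inner ℝ (g x) (y - x) : ℝ) + L / 2 * ‖y - x‖ ^ 2 := by
  set v := y - x with hv
  have hgcont : Continuous g := by
    refine (LipschitzWith.of_dist_le_mul (K := ⟨L, hL⟩) ?_).continuous
    intro a b; rw [dist_eq_norm, dist_eq_norm]; exact hLip a b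
  have hline : ∀ t : ℝ, HasDerivAt (fun s : ℝ => x + s • v) v t := by
    intro t
    simpa using ((hasDerivAt_id t).smul_const v).const_add x
  have hphi : ∀ t : ℝ, HasDerivAt (fun s : ℝ => f (x + s • v))
      ((inner ℝ (g (x + t • v)) v : ℝ)) t := by
    intro t
    have h1 := ((hg (x + t • v)).hasFDerivAt).comp_hasDerivAt t (hline t)
    simp only [InnerProductSpace.toDual_apply_apply] at h1
    exact h1
  have hcontD : Continuous fun t : ℝ => (inner ℝ (g (x + t • v)) v : ℝ) := by
    exact (hgcont.comp (by continuity)).inner continuous_const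
  have hFTC : ∫ t in (0:ℝ)..1, (inner ℝ (g (x + t • v)) v : ℝ)
      = f (x + (1:ℝ) • v) - f (x + (0:ℝ) • v) := by
    refine intervalIntegral.integral_eq_sub_of_hasDerivAt (fun t _ => hphi t) ?_
    exact (hcontD).intervalIntegrable _ _
  have hmono : ∫ t in (0:ℝ)..1, (inner ℝ (g (x + t • v)) v : ℝ)
      ≤ ∫ t in (0:ℝ)..1, ((inner ℝ (g x) v : ℝ) + L * t * ‖v‖ ^ 2) := by
    refine intervalIntegral.integral_mono_on (by norm_num)
      ((hcontD).intervalIntegrable _ _) ?_ ?_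
    · exact ((continuous_const.add ((continuous_const.mul continuous_id).mul
        continuous_const))).intervalIntegrable _ _
    · intro t ht
      have h1 : (inner ℝ (g (x + t • v)) v : ℝ) - (inner ℝ (g x) v : ℝ)
          = (inner ℝ (g (x + t • v) - g x) v : ℝ) := by rw [inner_sub_left]
      have h2 : (inner ℝ (g (x + t • v) - g x) v : ℝ) ≤ ‖g (x + t • v) - g x‖ * ‖v‖ :=
        real_inner_le_norm _ _
      have h3 : ‖g (x + t • v) - g x‖ ≤ L * (t * ‖v‖) := by
        have := hLip (x + t • v) x
        simpa [norm_smul, abs_of_nonneg ht.1, mul_assoc] using this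
      have h4 : ‖g (x + t • v) - g x‖ * ‖v‖ ≤ L * t * ‖v‖ ^ 2 := by
        have := mul_le_mul_of_nonneg_right h3 (norm_nonneg v)
        nlinarith [norm_nonneg v]
      linarith
  have hval : ∫ t in (0:ℝ)..1, ((inner ℝ (g x) v : ℝ) + L * t * ‖v‖ ^ 2)
      = (inner ℝ (g x) v : ℝ) + L / 2 * ‖v‖ ^ 2 := by
    have hre : ∀ t : ℝ, (inner ℝ (g x) v : ℝ) + L * t * ‖v‖ ^ 2
        = (inner ℝ (g x) v : ℝ) + t * (L * ‖v‖ ^ 2) := fun t => by ring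
    simp only [hre]
    rw [intervalIntegral.integral_add intervalIntegrable_const
      ((by fun_prop : Continuous fun t : ℝ => t * (L * ‖v‖ ^ 2)).intervalIntegrable _ _),
      intervalIntegral.integral_mul_const, integral_id]
    simp; ring
  have := hFTC ▸ hmono
  have hxy : x + (1:ℝ) • v = y := by simp [hv]
  have hx0 : x + (0:ℝ) • v = x := by simp
  rw [hxy, hx0] at this
  rw [hval] at this
  linarith

/-- Key pointwise inequality. -/
lemma my_key_ineq (a b h : F) {L Z Q : ℝ}
    (h1 : ‖b - a‖ ^ 2 ≤ L ^ 2 * Z) (h2 : ‖a - h‖ ^ 2 ≤ L ^ 2 * Q) :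
    -(inner ℝ b h : ℝ) ≤ L ^ 2 * Z + 3 / 4 * (L ^ 2 * Q)
      - 1 / 4 * ‖a‖ ^ 2 - 3 / 8 * ‖h‖ ^ 2 := by
  have e1 : (inner ℝ b h : ℝ) = (inner ℝ (b - a) h : ℝ) + (inner ℝ a h : ℝ) := by
    rw [← inner_add_left, sub_add_cancel]
  have e2 : ‖a - h‖ ^ 2 = ‖a‖ ^ 2 - 2 * (inner ℝ a h : ℝ) + ‖h‖ ^ 2 := by
    rw [@norm_sub_sq_real F]
  have e3 : -(inner ℝ (b - a) h : ℝ) ≤ ‖b - a‖ * ‖h‖ := by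
    have h1 := abs_real_inner_le_norm (b - a) h
    have h2 := neg_abs_le (inner ℝ (b-a) h : ℝ)
    linarith
  have e4 : ‖h‖ ≤ ‖a‖ + ‖a - h‖ := by
    simpa using norm_sub_le a (a - h)
  have e5 : ‖h‖ * ‖h‖ ≤ (‖a‖ + ‖a - h‖) * (‖a‖ + ‖a - h‖) :=
    mul_le_mul e4 e4 (norm_nonneg h) (by positivity)
  nlinarith [sq_nonneg (‖b - a‖ - ‖h‖ / 2), norm_nonneg (b - a), norm_nonneg h,
    sq_nonneg (‖a‖ - ‖a - h‖), norm_nonneg a, norm_nonneg (a - h)]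

lemma my_norm_avg_sq_le {N : ℕ} (hN : 0 < N) (v : Fin N → F) :
    ‖(N : ℝ)⁻¹ • ∑ i, v i‖ ^ 2 ≤ (N : ℝ)⁻¹ * ∑ i, ‖v i‖ ^ 2 := by
  have hNpos : (0:ℝ) < N := by exact_mod_cast hN
  have h1 : ‖∑ i, v i‖ ≤ ∑ i, ‖v i‖ := norm_sum_le _ _
  have h2 : (∑ i, ‖v i‖) ^ 2 ≤ (N : ℝ) * ∑ i, ‖v i‖ ^ 2 := by
    simpa using sq_sum_le_card_mul_sum_sq (s := (Finset.univ : Finset (Fin N)))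
      (f := fun i => ‖v i‖)
  have h3 : ‖∑ i, v i‖ ^ 2 ≤ (N:ℝ) * ∑ i, ‖v i‖ ^ 2 := by
    nlinarith [norm_nonneg (∑ i, v i), Finset.sum_nonneg (fun i (_ : i ∈ Finset.univ) => norm_nonneg (v i))]
  rw [norm_smul]
  have : ‖(N:ℝ)⁻¹‖ = (N:ℝ)⁻¹ := by
    rw [Real.norm_eq_abs, abs_of_nonneg (by positivity)]
  rw [this, mul_pow]
  rw [show ((N:ℝ)⁻¹)^2 = (N:ℝ)⁻¹ * (N:ℝ)⁻¹ by ring]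
  rw [mul_assoc]
  gcongr
  calc (N:ℝ)⁻¹ * ‖∑ i, v i‖^2 ≤ (N:ℝ)⁻¹ * ((N:ℝ) * ∑ i, ‖v i‖^2) := by gcongr
  _ = ∑ i, ‖v i‖ ^2 := by field_simp

end H2
section H3
set_option linter.unusedSectionVars false

variable {Ω : Type} {d : ℕ}


/-- Orthogonality: if `E[Z|m] = 0` a.e. and `Y` is `m`-measurable, `E⟪Y,Z⟫ = 0`. -/
lemma my_inner_condExp_zero {m mΩ : MeasurableSpace Ω} {μ : Measure Ω}
    [IsProbabilityMeasure μ] (hm : m ≤ mΩ)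
    {Y Z : Ω → EuclideanSpace ℝ (Fin d)}
    (hY : StronglyMeasurable[m] Y) (hY2 : MemLp Y 2 μ) (hZ2 : MemLp Z 2 μ)
    (hZ : μ[Z|m] =ᵐ[μ] 0) :
    ∫ ω, (inner ℝ (Y ω) (Z ω) : ℝ) ∂μ = 0 := by
  haveI : SigmaFinite (μ.trim hm) := by infer_instance
  have hZint : Integrable Z μ := hZ2.integrable one_le_two
  -- coordinate functions
  have hYk2 : ∀ k : Fin d, MemLp (fun ω => Y ω k) 2 μ := fun k => by
    have := (EuclideanSpace.proj k (𝕜 := ℝ)).comp_memLp' hY2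
    exact this
  have hZk2 : ∀ k : Fin d, MemLp (fun ω => Z ω k) 2 μ := fun k => by
    have := (EuclideanSpace.proj k (𝕜 := ℝ)).comp_memLp' hZ2
    exact this
  have hZkcond : ∀ k : Fin d, μ[fun ω => Z ω k|m] =ᵐ[μ] 0 := by
    intro k
    have h0 : (fun _ : Ω => (0:ℝ)) =ᵐ[μ] μ[fun ω => Z ω k|m] := by
      refine ae_eq_condExp_of_forall_setIntegral_eq hm ((hZk2 k).integrable one_le_two)
        (fun s _ _ => (integrable_const 0).integrableOn) ?_
        (StronglyMeasurable.aestronglyMeasurable (stronglyMeasurable_const))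
      intro s hs hμs
      have hZs : ∫ ω in s, Z ω ∂μ = 0 := by
        rw [← setIntegral_condExp hm hZint hs]
        rw [setIntegral_congr_ae (hm s hs) (hZ.mono fun ω hω _ => hω)]
        simp
      have : ∫ ω in s, Z ω k ∂μ = (EuclideanSpace.proj k (𝕜 := ℝ)) (∫ ω in s, Z ω ∂μ) := by
        rw [← ContinuousLinearMap.integral_comp_comm _ hZint.integrableOn]
        rfl
      rw [this, hZs]
      simp
    exact (h0.symm)
  -- expand inner ℝ product coordinatewise
  have hexp : ∀ ω, (inner ℝ (Y ω) (Z ω) : ℝ) = ∑ k : Fin d, Y ω k * Z ω k := by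
    intro ω
    simp [PiLp.inner_apply, RCLike.inner_apply, starRingEnd_apply, mul_comm]
  simp only [hexp]
  rw [integral_finset_sum]
  · refine Finset.sum_eq_zero fun k _ => ?_
    have hprod : Integrable (fun ω => Y ω k * Z ω k) μ := by
      have := my_integrable_inner (hYk2 k) (hZk2 k)
      simpa [RCLike.inner_apply, starRingEnd_apply, mul_comm] using this
    have hYkm : StronglyMeasurable[m] (fun ω => Y ω k) := by
      exact ((EuclideanSpace.proj k (𝕜 := ℝ)).continuous.comp_stronglyMeasurable hY)
    have hpull := condExp_mul_of_stronglyMeasurable_left (μ := μ) (m := m) hYkm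
      (by simpa [Pi.mul_def] using hprod) ((hZk2 k).integrable one_le_two)
    have : ∫ ω, Y ω k * Z ω k ∂μ = ∫ ω, ((fun ω => Y ω k) * μ[fun ω => Z ω k|m]) ω ∂μ := by
      rw [← integral_condExp hm (f := fun ω => Y ω k * Z ω k)]
      exact integral_congr_ae (by simpa [Pi.mul_def] using hpull)
    rw [this]
    have : ((fun ω => Y ω k) * μ[fun ω => Z ω k|m]) =ᵐ[μ] 0 := by
      filter_upwards [hZkcond k] with ω hω
      simp [hω]
    rw [integral_congr_ae this]
    simp
  · intro k _
    have := my_integrable_inner (hYk2 k) (hZk2 k)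
    simpa [RCLike.inner_apply, starRingEnd_apply, mul_comm] using this

end H3
section MyRecur
variable {N d : ℕ} {Ω : Type} [mΩ : MeasurableSpace Ω] {P : MTProblem N d Ω}

namespace MTRun

/-- Average of stochastic gradients. -/
def Gbar (S : MTRun P) (r : ℕ) (ω : Ω) : EuclideanSpace ℝ (Fin d) :=
  (N : ℝ)⁻¹ • ∑ i, S.G r i ω

/-- Average of true gradients at the iterates. -/
def hbar (S : MTRun P) (r : ℕ) (ω : Ω) : EuclideanSpace ℝ (Fin d) :=
  (N : ℝ)⁻¹ • ∑ i, P.g i (S.x r i ω)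

lemma my_avg_mix (v : Fin N → EuclideanSpace ℝ (Fin d)) :
    ∑ i, ∑ j, P.W i j • v j = ∑ j, v j := by
  rw [Finset.sum_comm]
  refine Finset.sum_congr rfl fun j _ => ?_
  rw [← Finset.sum_smul, P.hWcol j, one_smul]

lemma my_card_smul (hN : 0 < N) (w : EuclideanSpace ℝ (Fin d)) :
    ∑ _i : Fin N, (N : ℝ)⁻¹ • w = w := by
  rw [Finset.sum_const, Finset.card_univ, Fintype.card_fin]
  rw [← Nat.cast_smul_eq_nsmul ℝ, smul_smul]
  have hN' : (N : ℝ) ≠ 0 := Nat.cast_ne_zero.mpr hN.ne'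
  rw [mul_inv_cancel₀ hN', one_smul]

lemma my_ubar_zero (S : MTRun P) (ω : Ω) : S.ubar 0 ω = 0 := by
  simp only [ubar, hu0]
  rw [← Finset.smul_sum, Finset.sum_sub_distrib]
  rw [show (∑ _i : Fin N, (N : ℝ)⁻¹ • ∑ j, S.G 0 j ω) = ∑ j, S.G 0 j ω from
    my_card_smul P.hN _]
  simp

lemma my_cbar_zero (S : MTRun P) : ∀ r (ω : Ω), S.cbar r ω = 0 := by
  intro r
  induction r with
  | zero =>
    intro ω
    have : S.cbar 0 ω = S.ubar 0 ω := by
      simp only [cbar, ubar, hc0]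
    rw [this, S.my_ubar_zero]
  | succ r ih =>
    intro ω
    simp only [cbar, hc]
    rw [Finset.sum_add_distrib, my_avg_mix]
    rw [smul_add]
    have h1 : (N:ℝ)⁻¹ • ∑ j, (S.c r j ω - S.u (r+1) j ω) =
        S.cbar r ω - S.ubar (r+1) ω := by
      rw [Finset.sum_sub_distrib, smul_sub]; rfl
    rw [h1, ih ω]
    show 0 - S.ubar (r+1) ω + S.ubar (r+1) ω = 0
    abel

lemma my_ubar_succ (S : MTRun P) (r : ℕ) (ω : Ω) :
    S.ubar (r + 1) ω = P.β • S.ubar r ω + S.Gbar r ω := by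
  simp only [ubar, Gbar, hu]
  rw [Finset.sum_add_distrib, smul_add, Finset.smul_sum]
  congr 1
  rw [Finset.smul_sum, Finset.smul_sum]
  refine Finset.sum_congr rfl fun i _ => ?_
  rw [smul_comm]

lemma my_xbar_succ (S : MTRun P) (r : ℕ) (ω : Ω) :
    S.xbar (r + 1) ω = S.xbar r ω - S.η • S.ubar (r + 1) ω := by
  simp only [xbar]
  have : ∑ i, S.x (r+1) i ω
      = ∑ i, ((∑ j, P.W i j • S.x r j ω) - S.η • (S.u (r+1) i ω - S.c r i ω)) := by
    refine Finset.sum_congr rfl fun i _ => ?_; rw [hx]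
  rw [this, Finset.sum_sub_distrib, my_avg_mix, smul_sub]
  have h2 : (N:ℝ)⁻¹ • ∑ i, S.η • (S.u (r+1) i ω - S.c r i ω)
      = S.η • (S.ubar (r+1) ω - S.cbar r ω) := by
    rw [← Finset.smul_sum, smul_comm, Finset.sum_sub_distrib, smul_sub]; rfl
  rw [h2, S.my_cbar_zero r ω, sub_zero]

lemma my_zbar_succ (S : MTRun P) (r : ℕ) (ω : Ω) :
    S.zbar (r + 1) ω = S.zbar r ω - (S.η * (1 - P.β)⁻¹) • S.Gbar r ω := by
  have hβ : (1 - P.β) ≠ 0 := by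
    have := P.hβ1; intro h; rw [sub_eq_zero] at h; exact absurd h.symm (ne_of_lt this)
  have key : (1 - P.β)⁻¹ * (1 - P.β) = 1 := inv_mul_cancel₀ hβ
  cases r with
  | zero =>
    show (1 - P.β)⁻¹ • S.xbar 1 ω - (P.β * (1 - P.β)⁻¹) • S.xbar 0 ω
        = S.xbar 0 ω - (S.η * (1 - P.β)⁻¹) • S.Gbar 0 ω
    rw [S.my_xbar_succ 0 ω, S.my_ubar_succ 0 ω, S.my_ubar_zero ω]
    rw [smul_zero, zero_add]
    match_scalars <;> field_simp
  | succ r =>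
    show (1 - P.β)⁻¹ • S.xbar (r+2) ω - (P.β * (1 - P.β)⁻¹) • S.xbar (r+1) ω
        = ((1 - P.β)⁻¹ • S.xbar (r+1) ω - (P.β * (1 - P.β)⁻¹) • S.xbar r ω)
          - (S.η * (1 - P.β)⁻¹) • S.Gbar (r+1) ω
    rw [S.my_xbar_succ (r+1) ω, S.my_ubar_succ (r+1) ω]
    have hxr : S.xbar r ω = S.xbar (r+1) ω + S.η • S.ubar (r+1) ω := by
      rw [S.my_xbar_succ r ω]; abel
    rw [hxr]
    match_scalars
    all_goals field_simp
    all_goals try ring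
    all_goals tauto

end MTRun
end MyRecur
section MyInteg
variable {N d : ℕ} {Ω : Type} [mΩ : MeasurableSpace Ω] {P : MTProblem N d Ω}

namespace MTProblem

lemma my_g_cont (P : MTProblem N d Ω) (i : Fin N) : Continuous (P.g i) := by
  refine (LipschitzWith.of_dist_le_mul (K := ⟨P.L, P.hL.le⟩) ?_).continuous
  intro a b; rw [dist_eq_norm, dist_eq_norm]; exact P.hsmooth i a b

lemma my_g_growth (P : MTProblem N d Ω) (i : Fin N) (v : EuclideanSpace ℝ (Fin d)) :
    ‖P.g i v‖ ≤ ‖P.g i 0‖ + P.L * ‖v‖ := by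
  have h1 : ‖P.g i v - P.g i 0‖ ≤ P.L * ‖v - 0‖ := P.hsmooth i v 0
  have h2 := norm_sub_norm_le (P.g i v) (P.g i 0)
  rw [sub_zero] at h1
  linarith

lemma my_gradF_lip (P : MTProblem N d Ω) (v w : EuclideanSpace ℝ (Fin d)) :
    ‖P.gradF v - P.gradF w‖ ≤ P.L * ‖v - w‖ := by
  have hN : (0:ℝ) < N := by exact_mod_cast P.hN
  rw [gradF, gradF, ← smul_sub, ← Finset.sum_sub_distrib, norm_smul]
  have h1 : ‖∑ i, (P.g i v - P.g i w)‖ ≤ ∑ i : Fin N, P.L * ‖v - w‖ :=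
    (norm_sum_le _ _).trans (Finset.sum_le_sum fun i _ => P.hsmooth i v w)
  rw [Finset.sum_const, Finset.card_univ, Fintype.card_fin, nsmul_eq_mul] at h1
  have : ‖(N:ℝ)⁻¹‖ = (N:ℝ)⁻¹ := by rw [Real.norm_eq_abs, abs_of_nonneg (by positivity)]
  rw [this]
  calc (N:ℝ)⁻¹ * ‖∑ i, (P.g i v - P.g i w)‖ ≤ (N:ℝ)⁻¹ * ((N:ℝ) * (P.L * ‖v - w‖)) := by
        gcongr
    _ = P.L * ‖v - w‖ := by field_simp

lemma my_hasGradF (P : MTProblem N d Ω) (v : EuclideanSpace ℝ (Fin d)) :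
    HasGradientAt P.F (P.gradF v) v := by
  rw [hasGradientAt_iff_hasFDerivAt]
  have hsum : HasFDerivAt (fun w => ∑ i, P.f i w)
      (∑ i, (InnerProductSpace.toDual ℝ _ (P.g i v) : _ →L[ℝ] ℝ)) v :=
    HasFDerivAt.fun_sum fun i _ => (P.hgrad i v).hasFDerivAt
  have h2 := hsum.const_mul ((N:ℝ)⁻¹)
  have h3 : (InnerProductSpace.toDual ℝ (EuclideanSpace ℝ (Fin d)) (P.gradF v) : _ →L[ℝ] ℝ)
      = (N:ℝ)⁻¹ • ∑ i, (InnerProductSpace.toDual ℝ _ (P.g i v) : _ →L[ℝ] ℝ) := by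
    rw [gradF, _root_.map_smul, map_sum]
  have hF : P.F = fun w => (N:ℝ)⁻¹ * ∑ i, P.f i w := rfl
  rw [hF]
  exact h3 ▸ h2

lemma my_F_quad (P : MTProblem N d Ω) (x y : EuclideanSpace ℝ (Fin d)) :
    P.F y ≤ P.F x + (inner ℝ (P.gradF x) (y - x) : ℝ) + P.L / 2 * ‖y - x‖ ^ 2 :=
  my_quad_bound P.F P.gradF P.hL.le P.my_hasGradF P.my_gradF_lip x y

lemma my_F_cont (P : MTProblem N d Ω) : Continuous P.F :=
  Differentiable.continuous fun v => (P.my_hasGradF v).differentiableAt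

lemma my_gradF_cont (P : MTProblem N d Ω) : Continuous P.gradF := by
  refine (LipschitzWith.of_dist_le_mul (K := ⟨P.L, P.hL.le⟩) ?_).continuous
  intro a b; rw [dist_eq_norm, dist_eq_norm]; exact P.my_gradF_lip a b

lemma my_gradF_growth (P : MTProblem N d Ω) (v : EuclideanSpace ℝ (Fin d)) :
    ‖P.gradF v‖ ≤ ‖P.gradF 0‖ + P.L * ‖v‖ := by
  have h1 := P.my_gradF_lip v 0
  have h2 := norm_sub_norm_le (P.gradF v) (P.gradF 0)
  rw [sub_zero] at h1
  linarith

lemma my_F_growth (P : MTProblem N d Ω) (v : EuclideanSpace ℝ (Fin d)) :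
    |P.F v| ≤ |P.F 0| + ‖P.gradF 0‖ * ‖v‖ + 3 / 2 * P.L * ‖v‖ ^ 2 := by
  have hub := P.my_F_quad 0 v
  have hlb := P.my_F_quad v 0
  rw [sub_zero] at hub
  rw [zero_sub, norm_neg] at hlb
  have h1 : (inner ℝ (P.gradF 0) v : ℝ) ≤ ‖P.gradF 0‖ * ‖v‖ := real_inner_le_norm _ _
  have h2 : (inner ℝ (P.gradF v) (-v) : ℝ) ≤ ‖P.gradF v‖ * ‖v‖ := by
    have := real_inner_le_norm (P.gradF v) (-v)
    simpa [norm_neg] using this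
  have h3 := P.my_gradF_growth v
  have h4 : ‖P.gradF v‖ * ‖v‖ ≤ (‖P.gradF 0‖ + P.L * ‖v‖) * ‖v‖ :=
    mul_le_mul_of_nonneg_right h3 (norm_nonneg v)
  have h5 : (inner ℝ (P.gradF 0) v : ℝ) ≥ -(‖P.gradF 0‖ * ‖v‖) := by
    have := abs_real_inner_le_norm (P.gradF 0) v
    have := neg_abs_le (inner ℝ (P.gradF 0) v : ℝ)
    linarith
  rw [abs_le]
  constructor
  · have := abs_nonneg (P.F 0)
    nlinarith [neg_abs_le (P.F 0), le_abs_self (P.F 0), norm_nonneg v, P.hL.le]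
  · nlinarith [le_abs_self (P.F 0), norm_nonneg v, P.hL.le]

end MTProblem
end MyInteg
section MyInteg2
variable {N d : ℕ} {Ω : Type} [mΩ : MeasurableSpace Ω] {P : MTProblem N d Ω}

namespace MTRun

lemma my_memLp_xuc (S : MTRun P) : ∀ r : ℕ,
    (∀ i, MemLp (S.x r i) 2 P.μ) ∧ (∀ i, MemLp (S.u r i) 2 P.μ)
      ∧ (∀ i, MemLp (S.c r i) 2 P.μ) := by
  haveI := P.prob
  intro r
  induction r with
  | zero =>
    have hu0 : ∀ i, MemLp (S.u 0 i) 2 P.μ := by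
      intro i
      have : S.u 0 i = fun ω => (1 - P.β)⁻¹ • (S.G 0 i ω - (N:ℝ)⁻¹ • ∑ j, S.G 0 j ω) := by
        funext ω; exact S.hu0 i ω
      rw [this]
      exact my_memLp_smul (((S.hmeas 0 i)).sub (my_memLp_smul (memLp_finset_sum (f := fun j => S.G 0 j) _ fun j _ => S.hmeas 0 j) _)) _
    refine ⟨fun i => ?_, hu0, fun i => ?_⟩
    · rw [S.hx0 i]; exact memLp_const _
    · rw [S.hc0 i]; exact hu0 i
  | succ r ih =>
    obtain ⟨hx, hu, hc⟩ := ih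
    have hu' : ∀ i, MemLp (S.u (r+1) i) 2 P.μ := by
      intro i
      have : S.u (r+1) i = fun ω => P.β • S.u r i ω + S.G r i ω := by
        funext ω; exact S.hu r i ω
      rw [this]
      exact (my_memLp_smul (hu i) _).add (S.hmeas r i)
    refine ⟨fun i => ?_, hu', fun i => ?_⟩
    · have : S.x (r+1) i = fun ω =>
          (∑ j, P.W i j • S.x r j ω) - S.η • (S.u (r+1) i ω - S.c r i ω) := by
        funext ω; exact S.hx r i ω
      rw [this]
      exact (memLp_finset_sum (f := fun j ω => P.W i j • S.x r j ω) _ fun j _ => my_memLp_smul (hx j) _).sub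
        (my_memLp_smul ((hu' i).sub (hc i)) _)
    · have : S.c (r+1) i = fun ω =>
          (∑ j, P.W i j • (S.c r j ω - S.u (r+1) j ω)) + S.u (r+1) i ω := by
        funext ω; exact S.hc r i ω
      rw [this]
      exact (memLp_finset_sum (f := fun j ω => P.W i j • (S.c r j ω - S.u (r+1) j ω)) _ fun j _ => my_memLp_smul ((hc j).sub (hu' j)) _).add (hu' i)

lemma my_memLp_x (S : MTRun P) (r : ℕ) (i : Fin N) : MemLp (S.x r i) 2 P.μ :=
  (S.my_memLp_xuc r).1 i

lemma my_sm_gx (S : MTRun P) (r : ℕ) (i : Fin N) :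
    StronglyMeasurable[S.ℱ r] (fun ω => P.g i (S.x r i ω)) :=
  (P.my_g_cont i).comp_stronglyMeasurable (S.hadapted_x r i)

lemma my_memLp_gx (S : MTRun P) (r : ℕ) (i : Fin N) :
    MemLp (fun ω => P.g i (S.x r i ω)) 2 P.μ := by
  haveI := P.prob
  refine my_memLp_linear_growth (((S.my_sm_gx r i).mono (S.ℱ.le r)).aestronglyMeasurable)
    (S.my_memLp_x r i) (norm_nonneg _) P.hL.le (fun ω => P.my_g_growth i _)

lemma my_sm_xbar (S : MTRun P) (r : ℕ) : StronglyMeasurable[S.ℱ r] (S.xbar r) := by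
  have : S.xbar r = fun ω => (N:ℝ)⁻¹ • ∑ i, S.x r i ω := rfl
  rw [this]
  exact my_sm_smul (Finset.stronglyMeasurable_fun_sum _ fun i _ => S.hadapted_x r i) _

lemma my_memLp_xbar (S : MTRun P) (r : ℕ) : MemLp (S.xbar r) 2 P.μ := by
  have : S.xbar r = fun ω => (N:ℝ)⁻¹ • ∑ i, S.x r i ω := rfl
  rw [this]
  exact my_memLp_smul (memLp_finset_sum (f := fun i => S.x r i) _ fun i _ => S.my_memLp_x r i) _

lemma my_sm_zbar (S : MTRun P) (r : ℕ) : StronglyMeasurable[S.ℱ r] (S.zbar r) := by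
  cases r with
  | zero => exact S.my_sm_xbar 0
  | succ r =>
    have : S.zbar (r+1) = fun ω =>
        (1 - P.β)⁻¹ • S.xbar (r+1) ω - (P.β * (1 - P.β)⁻¹) • S.xbar r ω := rfl
    rw [this]
    exact (my_sm_smul (S.my_sm_xbar (r+1)) _).sub
      (my_sm_smul ((S.my_sm_xbar r).mono (S.ℱ.mono (Nat.le_succ r))) _)

lemma my_memLp_zbar (S : MTRun P) (r : ℕ) : MemLp (S.zbar r) 2 P.μ := by
  cases r with
  | zero => exact S.my_memLp_xbar 0
  | succ r =>
    have : S.zbar (r+1) = fun ω =>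
        (1 - P.β)⁻¹ • S.xbar (r+1) ω - (P.β * (1 - P.β)⁻¹) • S.xbar r ω := rfl
    rw [this]
    exact (my_memLp_smul (S.my_memLp_xbar (r+1)) _).sub (my_memLp_smul (S.my_memLp_xbar r) _)

lemma my_sm_hbar (S : MTRun P) (r : ℕ) : StronglyMeasurable[S.ℱ r] (S.hbar r) :=
  my_sm_smul (Finset.stronglyMeasurable_fun_sum _ fun i _ => S.my_sm_gx r i) _

lemma my_memLp_hbar (S : MTRun P) (r : ℕ) : MemLp (S.hbar r) 2 P.μ :=
  my_memLp_smul (memLp_finset_sum (f := fun i ω => P.g i (S.x r i ω)) _ fun i _ => S.my_memLp_gx r i) _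

lemma my_memLp_Gbar (S : MTRun P) (r : ℕ) : MemLp (S.Gbar r) 2 P.μ :=
  my_memLp_smul (memLp_finset_sum (f := fun i => S.G r i) _ fun i _ => S.hmeas r i) _

lemma my_sm_gradF_zbar (S : MTRun P) (r : ℕ) :
    StronglyMeasurable[S.ℱ r] (fun ω => P.gradF (S.zbar r ω)) :=
  P.my_gradF_cont.comp_stronglyMeasurable (S.my_sm_zbar r)

lemma my_memLp_gradF_zbar (S : MTRun P) (r : ℕ) :
    MemLp (fun ω => P.gradF (S.zbar r ω)) 2 P.μ := by
  haveI := P.prob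
  exact my_memLp_linear_growth
    (((S.my_sm_gradF_zbar r).mono (S.ℱ.le r)).aestronglyMeasurable)
    (S.my_memLp_zbar r) (norm_nonneg _) P.hL.le (fun ω => P.my_gradF_growth _)

lemma my_memLp_gradF_xbar (S : MTRun P) (r : ℕ) :
    MemLp (fun ω => P.gradF (S.xbar r ω)) 2 P.μ := by
  haveI := P.prob
  exact my_memLp_linear_growth
    ((P.my_gradF_cont.comp_stronglyMeasurable ((S.my_sm_xbar r).mono
      (S.ℱ.le r))).aestronglyMeasurable)
    (S.my_memLp_xbar r) (norm_nonneg _) P.hL.le (fun ω => P.my_gradF_growth _)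

lemma my_int_F_zbar (S : MTRun P) (r : ℕ) :
    Integrable (fun ω => P.F (S.zbar r ω)) P.μ := by
  haveI := P.prob
  have hz := S.my_memLp_zbar r
  have hmeas : AEStronglyMeasurable (fun ω => P.F (S.zbar r ω)) P.μ :=
    P.my_F_cont.comp_aestronglyMeasurable hz.aestronglyMeasurable
  have hnorm : Integrable (fun ω => ‖S.zbar r ω‖) P.μ :=
    (hz.integrable one_le_two).norm
  have hsq : Integrable (fun ω => ‖S.zbar r ω‖ ^ 2) P.μ := my_integrable_normsq hz
  refine Integrable.mono' (((integrable_const (|P.F 0|)).add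
    (hnorm.const_mul ‖P.gradF 0‖)).add (hsq.const_mul (3/2 * P.L))) hmeas ?_
  filter_upwards with ω
  have := P.my_F_growth (S.zbar r ω)
  simpa [Real.norm_eq_abs, mul_comm] using this

end MTRun
end MyInteg2
section MyCond
variable {N d : ℕ} {Ω : Type} [mΩ : MeasurableSpace Ω] {P : MTProblem N d Ω}

namespace MTRun

/-- Individual noise. -/
def nois (S : MTRun P) (r : ℕ) (i : Fin N) (ω : Ω) : EuclideanSpace ℝ (Fin d) :=
  S.G r i ω - P.g i (S.x r i ω)

lemma my_memLp_nois (S : MTRun P) (r : ℕ) (i : Fin N) : MemLp (S.nois r i) 2 P.μ :=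
  (S.hmeas r i).sub (S.my_memLp_gx r i)

lemma my_condExp_nois (S : MTRun P) (r : ℕ) (i : Fin N) :
    P.μ[S.nois r i|S.ℱ r] =ᵐ[P.μ] 0 := by
  haveI := P.prob
  have hGint : Integrable (S.G r i) P.μ := (S.hmeas r i).integrable one_le_two
  have hgint : Integrable (fun ω => P.g i (S.x r i ω)) P.μ :=
    (S.my_memLp_gx r i).integrable one_le_two
  have h1 := condExp_sub (μ := P.μ) (m := S.ℱ r) hGint hgint
  have h2 := S.hunbiased r i
  have h3 : P.μ[fun ω => P.g i (S.x r i ω)|S.ℱ r] = fun ω => P.g i (S.x r i ω) :=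
    condExp_of_stronglyMeasurable (S.ℱ.le r) (S.my_sm_gx r i) hgint
  have : S.nois r i = S.G r i - fun ω => P.g i (S.x r i ω) := rfl
  rw [this]
  filter_upwards [h1, h2] with ω hω1 hω2
  rw [hω1]
  simp only [Pi.sub_apply, hω2, h3]
  simp

lemma my_nbar_eq (S : MTRun P) (r : ℕ) :
    (fun ω => S.Gbar r ω - S.hbar r ω) = fun ω => (N:ℝ)⁻¹ • ∑ i, S.nois r i ω := by
  funext ω
  simp only [Gbar, hbar, nois, ← smul_sub, Finset.sum_sub_distrib]

lemma my_condExp_nbar (S : MTRun P) (r : ℕ) :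
    P.μ[fun ω => S.Gbar r ω - S.hbar r ω|S.ℱ r] =ᵐ[P.μ] 0 := by
  haveI := P.prob
  rw [S.my_nbar_eq r]
  have hint : ∀ i ∈ Finset.univ, Integrable (S.nois r i) P.μ := fun i _ =>
    (S.my_memLp_nois r i).integrable one_le_two
  have hfun : (fun ω => (N:ℝ)⁻¹ • ∑ i, S.nois r i ω)
      = (N:ℝ)⁻¹ • ∑ i, S.nois r i := by
    funext ω; simp [Finset.sum_apply]
  rw [hfun]
  have h1 := condExp_smul (μ := P.μ) (m := S.ℱ r) ((N:ℝ)⁻¹) (∑ i, S.nois r i)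
  have h2 := condExp_finset_sum (μ := P.μ) (m := S.ℱ r) hint
  have h3 : ∀ᵐ ω ∂P.μ, (∑ i, P.μ[S.nois r i|S.ℱ r]) ω = 0 := by
    have := ae_all_iff.mpr fun i : Fin N => S.my_condExp_nois r i
    filter_upwards [this] with ω hω
    rw [Finset.sum_apply]
    exact Finset.sum_eq_zero fun i _ => hω i
  filter_upwards [h1, h2, h3] with ω hω1 hω2 hω3
  rw [hω1, Pi.smul_apply, hω2, hω3]
  simp

lemma my_orth (S : MTRun P) (r : ℕ) {Y : Ω → EuclideanSpace ℝ (Fin d)}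
    (hY : StronglyMeasurable[S.ℱ r] Y) (hY2 : MemLp Y 2 P.μ) :
    ∫ ω, (inner ℝ (Y ω) (S.Gbar r ω - S.hbar r ω) : ℝ) ∂P.μ = 0 := by
  haveI := P.prob
  exact my_inner_condExp_zero (S.ℱ.le r) hY hY2
    ((S.my_memLp_Gbar r).sub (S.my_memLp_hbar r)) (S.my_condExp_nbar r)

lemma my_var_nbar (S : MTRun P) (r : ℕ) :
    ∫ ω, ‖S.Gbar r ω - S.hbar r ω‖ ^ 2 ∂P.μ ≤ P.σ ^ 2 / N := by
  haveI := P.prob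
  have hNpos : (0:ℝ) < N := by exact_mod_cast P.hN
  have hptw : ∀ ω, ‖S.Gbar r ω - S.hbar r ω‖ ^ 2
      = ((N:ℝ)⁻¹)^2 * ∑ i, ∑ j, (inner ℝ (S.nois r i ω) (S.nois r j ω) : ℝ) := by
    intro ω
    have h1 : S.Gbar r ω - S.hbar r ω = (N:ℝ)⁻¹ • ∑ i, S.nois r i ω := by
      have := congrFun (S.my_nbar_eq r) ω; simpa using this
    rw [h1, norm_smul, mul_pow]
    have h2 : ‖∑ i, S.nois r i ω‖ ^ 2
        = ∑ i, ∑ j, (inner ℝ (S.nois r i ω) (S.nois r j ω) : ℝ) := by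
      rw [← real_inner_self_eq_norm_sq, sum_inner]
      exact Finset.sum_congr rfl fun i _ => inner_sum _ _ _
    rw [h2]
    congr 1
    rw [Real.norm_eq_abs, sq_abs]
  have hint : ∀ (i j : Fin N), Integrable
      (fun ω => (inner ℝ (S.nois r i ω) (S.nois r j ω) : ℝ)) P.μ := fun i j =>
    my_integrable_inner (S.my_memLp_nois r i) (S.my_memLp_nois r j)
  calc ∫ ω, ‖S.Gbar r ω - S.hbar r ω‖ ^ 2 ∂P.μ
      = ((N:ℝ)⁻¹)^2 * ∫ ω, ∑ i, ∑ j, (inner ℝ (S.nois r i ω) (S.nois r j ω) : ℝ) ∂P.μ := by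
        rw [← MeasureTheory.integral_const_mul]
        exact integral_congr_ae (Filter.Eventually.of_forall hptw)
    _ = ((N:ℝ)⁻¹)^2 * ∑ i, ∑ j, ∫ ω, (inner ℝ (S.nois r i ω) (S.nois r j ω) : ℝ) ∂P.μ := by
        congr 1
        rw [integral_finset_sum _ (fun i _ => integrable_finset_sum _ fun j _ => hint i j)]
        exact Finset.sum_congr rfl fun i _ => integral_finset_sum _ fun j _ => hint i j
    _ ≤ ((N:ℝ)⁻¹)^2 * ∑ i : Fin N, P.σ ^ 2 := by
        have hrow : ∀ i : Fin N,
            (∑ j, ∫ ω, (inner ℝ (S.nois r i ω) (S.nois r j ω) : ℝ) ∂P.μ) ≤ P.σ ^ 2 := by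
          intro i
          rw [Finset.sum_eq_single i]
          · have : ∫ ω, (inner ℝ (S.nois r i ω) (S.nois r i ω) : ℝ) ∂P.μ
                = ∫ ω, ‖S.nois r i ω‖ ^ 2 ∂P.μ := by
              refine integral_congr_ae (Filter.Eventually.of_forall fun ω => ?_)
              simp only [real_inner_self_eq_norm_sq]
            rw [this]
            exact S.hvar r i
          · intro j _ hji
            exact S.horth r r i j (by simp [Prod.ext_iff, (Ne.symm hji)])
          · intro h; exact absurd (Finset.mem_univ i) h
        have := Finset.sum_le_sum fun i (_ : i ∈ Finset.univ) => hrow i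
        have hsq : (0:ℝ) ≤ ((N:ℝ)⁻¹)^2 := sq_nonneg _
        exact mul_le_mul_of_nonneg_left this hsq
    _ = P.σ ^ 2 / N := by
        rw [Finset.sum_const, Finset.card_univ, Fintype.card_fin, nsmul_eq_mul]
        field_simp

end MTRun
end MyCond

set_option maxHeartbeats 2000000 in
/-- **Descent Lemma**: if `η ≤ (1−β)/(4L)`, then for every round `r ≥ 0`,
`E f(z̄^{(r+1)}) ≤ E f(z̄^{(r)}) + (L²η/(1−β)) E‖x̄^{(r)} − z̄^{(r)}‖² + (L²η/(1−β)) Ξ^{(r)}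
  − (η/(4(1−β))) E‖(1/N)∑ᵢ∇f_i(x_i^{(r)})‖² − (η/(4(1−β))) E‖∇f(x̄^{(r)})‖²
  + Lσ²η²/(2N(1−β)²)`. -/
theorem descent_lemma
    (N d : ℕ) (Ω : Type) [mΩ : MeasurableSpace Ω]
    (P : MTProblem N d Ω) (S : MTRun P)
    (hstep : S.η ≤ (1 - P.β) / (4 * P.L)) :
    ∀ r : ℕ,
      ∫ ω, P.F (S.zbar (r + 1) ω) ∂P.μ ≤
        ∫ ω, P.F (S.zbar r ω) ∂P.μ
          + P.L ^ 2 * S.η / (1 - P.β) * ∫ ω, ‖S.xbar r ω - S.zbar r ω‖ ^ 2 ∂P.μ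
          + P.L ^ 2 * S.η / (1 - P.β) * S.Xi r
          - S.η / (4 * (1 - P.β)) *
              ∫ ω, ‖(N : ℝ)⁻¹ • ∑ i, P.g i (S.x r i ω)‖ ^ 2 ∂P.μ
          - S.η / (4 * (1 - P.β)) * ∫ ω, ‖P.gradF (S.xbar r ω)‖ ^ 2 ∂P.μ
          + P.L * P.σ ^ 2 * S.η ^ 2 / (2 * (N : ℝ) * (1 - P.β) ^ 2) := by
  intro r
  haveI := P.prob
  have hβpos : (0:ℝ) < 1 - P.β := by linarith [P.hβ1]
  have hNpos : (0:ℝ) < N := by exact_mod_cast P.hN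
  set γ : ℝ := S.η * (1 - P.β)⁻¹ with hγdef
  have hγpos : 0 < γ := mul_pos S.hη (inv_pos.mpr hβpos)
  have hγL : P.L * γ ≤ 1/4 := by
    have h1 : P.L * S.η ≤ (1 - P.β) / 4 := by
      have := mul_le_mul_of_nonneg_left hstep P.hL.le
      calc P.L * S.η ≤ P.L * ((1 - P.β) / (4 * P.L)) := this
        _ = (1 - P.β) / 4 := by
          have hLne : P.L ≠ 0 := P.hL.ne'
          field_simp
    rw [hγdef, ← mul_assoc]
    calc P.L * S.η * (1 - P.β)⁻¹ ≤ ((1 - P.β)/4) * (1 - P.β)⁻¹ := by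
          exact mul_le_mul_of_nonneg_right h1 (by positivity)
      _ = 1/4 := by field_simp
  -- abbreviations
  set Y : Ω → EuclideanSpace ℝ (Fin d) := fun ω => P.gradF (S.zbar r ω) with hYdef
  set A : Ω → EuclideanSpace ℝ (Fin d) := fun ω => P.gradF (S.xbar r ω) with hAdef
  -- memLp facts
  have hY2 : MemLp Y 2 P.μ := S.my_memLp_gradF_zbar r
  have hA2 : MemLp A 2 P.μ := S.my_memLp_gradF_xbar r
  have hh2 : MemLp (S.hbar r) 2 P.μ := S.my_memLp_hbar r
  have hG2 : MemLp (S.Gbar r) 2 P.μ := S.my_memLp_Gbar r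
  have hn2 : MemLp (fun ω => S.Gbar r ω - S.hbar r ω) 2 P.μ := hG2.sub hh2
  have hxz2 : MemLp (fun ω => S.xbar r ω - S.zbar r ω) 2 P.μ :=
    (S.my_memLp_xbar r).sub (S.my_memLp_zbar r)
  -- integrability facts
  have hFz1 : Integrable (fun ω => P.F (S.zbar (r+1) ω)) P.μ := S.my_int_F_zbar (r+1)
  have hFz : Integrable (fun ω => P.F (S.zbar r ω)) P.μ := S.my_int_F_zbar r
  have hYG : Integrable (fun ω => (inner ℝ (Y ω) (S.Gbar r ω) : ℝ)) P.μ :=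
    my_integrable_inner hY2 hG2
  have hYh : Integrable (fun ω => (inner ℝ (Y ω) (S.hbar r ω) : ℝ)) P.μ :=
    my_integrable_inner hY2 hh2
  have hYn : Integrable (fun ω => (inner ℝ (Y ω) (S.Gbar r ω - S.hbar r ω) : ℝ)) P.μ :=
    my_integrable_inner hY2 hn2
  have hhn : Integrable (fun ω => (inner ℝ (S.hbar r ω) (S.Gbar r ω - S.hbar r ω) : ℝ)) P.μ :=
    my_integrable_inner hh2 hn2
  have hGsq : Integrable (fun ω => ‖S.Gbar r ω‖ ^ 2) P.μ := my_integrable_normsq hG2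
  have hhsq : Integrable (fun ω => ‖S.hbar r ω‖ ^ 2) P.μ := my_integrable_normsq hh2
  have hnsq : Integrable (fun ω => ‖S.Gbar r ω - S.hbar r ω‖ ^ 2) P.μ := my_integrable_normsq hn2
  have hAsq : Integrable (fun ω => ‖A ω‖ ^ 2) P.μ := my_integrable_normsq hA2
  have hZsq : Integrable (fun ω => ‖S.xbar r ω - S.zbar r ω‖ ^ 2) P.μ := my_integrable_normsq hxz2
  have hQint : Integrable (fun ω => (N:ℝ)⁻¹ * ∑ i, ‖S.x r i ω - S.xbar r ω‖ ^ 2) P.μ := by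
    refine Integrable.const_mul ?_ _
    exact integrable_finset_sum _ fun i _ =>
      my_integrable_normsq ((S.my_memLp_x r i).sub (S.my_memLp_xbar r))
  -- expectations as reals
  set IYh : ℝ := ∫ ω, (inner ℝ (Y ω) (S.hbar r ω) : ℝ) ∂P.μ with hIYh
  set Ih : ℝ := ∫ ω, ‖S.hbar r ω‖ ^ 2 ∂P.μ with hIh
  set In : ℝ := ∫ ω, ‖S.Gbar r ω - S.hbar r ω‖ ^ 2 ∂P.μ with hIn
  set IZ : ℝ := ∫ ω, ‖S.xbar r ω - S.zbar r ω‖ ^ 2 ∂P.μ with hIZ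
  set IA : ℝ := ∫ ω, ‖A ω‖ ^ 2 ∂P.μ with hIA
  -- Step 2 : orthogonality
  have horthY : ∫ ω, (inner ℝ (Y ω) (S.Gbar r ω - S.hbar r ω) : ℝ) ∂P.μ = 0 :=
    S.my_orth r (S.my_sm_gradF_zbar r) hY2
  have horthh : ∫ ω, (inner ℝ (S.hbar r ω) (S.Gbar r ω - S.hbar r ω) : ℝ) ∂P.μ = 0 :=
    S.my_orth r (S.my_sm_hbar r) hh2
  have s2 : ∫ ω, (inner ℝ (Y ω) (S.Gbar r ω) : ℝ) ∂P.μ = IYh := by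
    have hsplit : ∀ ω, (inner ℝ (Y ω) (S.Gbar r ω) : ℝ)
        = (inner ℝ (Y ω) (S.hbar r ω) : ℝ) + (inner ℝ (Y ω) (S.Gbar r ω - S.hbar r ω) : ℝ) := by
      intro ω; rw [← inner_add_right]; congr 1; abel
    calc ∫ ω, (inner ℝ (Y ω) (S.Gbar r ω) : ℝ) ∂P.μ
        = ∫ ω, ((inner ℝ (Y ω) (S.hbar r ω) : ℝ)
            + (inner ℝ (Y ω) (S.Gbar r ω - S.hbar r ω) : ℝ)) ∂P.μ :=
          integral_congr_ae (Filter.Eventually.of_forall hsplit)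
      _ = IYh + ∫ ω, (inner ℝ (Y ω) (S.Gbar r ω - S.hbar r ω) : ℝ) ∂P.μ :=
          integral_add hYh hYn
      _ = IYh := by rw [horthY, add_zero]
  -- Step 3 : second moment decomposition
  have s3 : ∫ ω, ‖S.Gbar r ω‖ ^ 2 ∂P.μ = Ih + In := by
    have hsplit : ∀ ω, ‖S.Gbar r ω‖ ^ 2
        = ‖S.hbar r ω‖ ^ 2 + 2 * (inner ℝ (S.hbar r ω) (S.Gbar r ω - S.hbar r ω) : ℝ)
          + ‖S.Gbar r ω - S.hbar r ω‖ ^ 2 := by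
      intro ω
      have h0 : S.hbar r ω + (S.Gbar r ω - S.hbar r ω) = S.Gbar r ω := by abel
      have hns := norm_add_sq_real (S.hbar r ω) (S.Gbar r ω - S.hbar r ω)
      rw [h0] at hns
      exact hns
    calc ∫ ω, ‖S.Gbar r ω‖ ^ 2 ∂P.μ
        = ∫ ω, (‖S.hbar r ω‖ ^ 2 + 2 * (inner ℝ (S.hbar r ω) (S.Gbar r ω - S.hbar r ω) : ℝ)
            + ‖S.Gbar r ω - S.hbar r ω‖ ^ 2) ∂P.μ :=
          integral_congr_ae (Filter.Eventually.of_forall hsplit)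
      _ = (∫ ω, (‖S.hbar r ω‖ ^ 2 + 2 * (inner ℝ (S.hbar r ω) (S.Gbar r ω - S.hbar r ω) : ℝ)) ∂P.μ)
            + In := by
          have hint1 : Integrable (fun ω => ‖S.hbar r ω‖ ^ 2
              + 2 * (inner ℝ (S.hbar r ω) (S.Gbar r ω - S.hbar r ω) : ℝ)) P.μ :=
            hhsq.add (hhn.const_mul 2)
          rw [integral_add hint1 hnsq]
      _ = Ih + (∫ ω, 2 * (inner ℝ (S.hbar r ω) (S.Gbar r ω - S.hbar r ω) : ℝ) ∂P.μ) + In := by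
          have hint2 : Integrable (fun ω =>
              2 * (inner ℝ (S.hbar r ω) (S.Gbar r ω - S.hbar r ω) : ℝ)) P.μ := hhn.const_mul 2
          rw [integral_add hhsq hint2]
      _ = Ih + In := by
          rw [MeasureTheory.integral_const_mul, horthh]; ring
  have s3b : In ≤ P.σ ^ 2 / N := S.my_var_nbar r
  -- Step 1 : descent inequality
  have s1 : ∫ ω, P.F (S.zbar (r+1) ω) ∂P.μ
      ≤ ∫ ω, P.F (S.zbar r ω) ∂P.μ - γ * IYh + P.L / 2 * γ ^ 2 * (Ih + In) := by
    have hptw : ∀ ω, P.F (S.zbar (r+1) ω)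
        ≤ P.F (S.zbar r ω) + (-γ) * (inner ℝ (Y ω) (S.Gbar r ω) : ℝ)
          + (P.L / 2 * γ ^ 2) * ‖S.Gbar r ω‖ ^ 2 := by
      intro ω
      have hq := P.my_F_quad (S.zbar r ω) (S.zbar (r+1) ω)
      have hd : S.zbar (r+1) ω - S.zbar r ω = -(γ • S.Gbar r ω) := by
        rw [S.my_zbar_succ r ω]; abel
      rw [hd] at hq
      have e1 : (inner ℝ (Y ω) (-(γ • S.Gbar r ω)) : ℝ)
          = (-γ) * (inner ℝ (Y ω) (S.Gbar r ω) : ℝ) := by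
        rw [inner_neg_right, real_inner_smul_right]; ring
      have e2 : ‖-(γ • S.Gbar r ω)‖ ^ 2 = γ ^ 2 * ‖S.Gbar r ω‖ ^ 2 := by
        rw [norm_neg, norm_smul, mul_pow, Real.norm_eq_abs, sq_abs]
      rw [e1, e2] at hq
      calc P.F (S.zbar (r+1) ω)
          ≤ P.F (S.zbar r ω) + (-γ) * (inner ℝ (Y ω) (S.Gbar r ω) : ℝ)
            + P.L / 2 * (γ ^ 2 * ‖S.Gbar r ω‖ ^ 2) := hq
        _ = P.F (S.zbar r ω) + (-γ) * (inner ℝ (Y ω) (S.Gbar r ω) : ℝ)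
            + (P.L / 2 * γ ^ 2) * ‖S.Gbar r ω‖ ^ 2 := by ring
    have hint1 : Integrable (fun ω => P.F (S.zbar r ω)
        + (-γ) * (inner ℝ (Y ω) (S.Gbar r ω) : ℝ)) P.μ := hFz.add (hYG.const_mul _)
    have hint2 : Integrable (fun ω => (-γ) * (inner ℝ (Y ω) (S.Gbar r ω) : ℝ)) P.μ :=
      hYG.const_mul _
    have hint3 : Integrable (fun ω => (P.L / 2 * γ ^ 2) * ‖S.Gbar r ω‖ ^ 2) P.μ :=
      hGsq.const_mul _
    have hRHSint : Integrable (fun ω => P.F (S.zbar r ω)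
        + (-γ) * (inner ℝ (Y ω) (S.Gbar r ω) : ℝ)
        + (P.L / 2 * γ ^ 2) * ‖S.Gbar r ω‖ ^ 2) P.μ := hint1.add hint3
    have hmono := integral_mono hFz1 hRHSint hptw
    calc ∫ ω, P.F (S.zbar (r+1) ω) ∂P.μ
        ≤ ∫ ω, (P.F (S.zbar r ω) + (-γ) * (inner ℝ (Y ω) (S.Gbar r ω) : ℝ)
            + (P.L / 2 * γ ^ 2) * ‖S.Gbar r ω‖ ^ 2) ∂P.μ := hmono
      _ = (∫ ω, (P.F (S.zbar r ω) + (-γ) * (inner ℝ (Y ω) (S.Gbar r ω) : ℝ)) ∂P.μ)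
            + (P.L / 2 * γ ^ 2) * ∫ ω, ‖S.Gbar r ω‖ ^ 2 ∂P.μ := by
          rw [integral_add hint1 hint3, MeasureTheory.integral_const_mul]
      _ = (∫ ω, P.F (S.zbar r ω) ∂P.μ) + (-γ) * (∫ ω, (inner ℝ (Y ω) (S.Gbar r ω) : ℝ) ∂P.μ)
            + (P.L / 2 * γ ^ 2) * ∫ ω, ‖S.Gbar r ω‖ ^ 2 ∂P.μ := by
          rw [integral_add hFz hint2, MeasureTheory.integral_const_mul]
      _ = ∫ ω, P.F (S.zbar r ω) ∂P.μ - γ * IYh + P.L / 2 * γ ^ 2 * (Ih + In) := by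
          rw [s2, s3]; ring
  -- Step 4 : key pointwise inequality integrated
  have s4 : -IYh ≤ P.L ^ 2 * IZ
      + 3/4 * (P.L ^ 2 * ((N:ℝ)⁻¹ * ∫ ω, (∑ i, ‖S.x r i ω - S.xbar r ω‖ ^ 2) ∂P.μ))
      - 1/4 * IA - 3/8 * Ih := by
    have hptw : ∀ ω, -(inner ℝ (Y ω) (S.hbar r ω) : ℝ)
        ≤ P.L ^ 2 * ‖S.xbar r ω - S.zbar r ω‖ ^ 2
          + 3/4 * (P.L ^ 2 * ((N:ℝ)⁻¹ * ∑ i, ‖S.x r i ω - S.xbar r ω‖ ^ 2))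
          - 1/4 * ‖A ω‖ ^ 2 - 3/8 * ‖S.hbar r ω‖ ^ 2 := by
      intro ω
      have h1 : ‖Y ω - A ω‖ ^ 2 ≤ P.L ^ 2 * ‖S.xbar r ω - S.zbar r ω‖ ^ 2 := by
        have := P.my_gradF_lip (S.zbar r ω) (S.xbar r ω)
        have h2 : ‖Y ω - A ω‖ ≤ P.L * ‖S.xbar r ω - S.zbar r ω‖ := by
          rw [norm_sub_rev (S.xbar r ω)]
          exact this
        calc ‖Y ω - A ω‖ ^ 2 ≤ (P.L * ‖S.xbar r ω - S.zbar r ω‖) ^ 2 := by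
              have hn := norm_nonneg (Y ω - A ω)
              nlinarith
          _ = P.L ^ 2 * ‖S.xbar r ω - S.zbar r ω‖ ^ 2 := by ring
      have h2 : ‖A ω - S.hbar r ω‖ ^ 2
          ≤ P.L ^ 2 * ((N:ℝ)⁻¹ * ∑ i, ‖S.x r i ω - S.xbar r ω‖ ^ 2) := by
        have hform : A ω - S.hbar r ω
            = (N:ℝ)⁻¹ • ∑ i, (P.g i (S.xbar r ω) - P.g i (S.x r i ω)) := by
          simp only [hAdef, MTProblem.gradF, MTRun.hbar, ← smul_sub, Finset.sum_sub_distrib]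
        rw [hform]
        calc ‖(N:ℝ)⁻¹ • ∑ i, (P.g i (S.xbar r ω) - P.g i (S.x r i ω))‖ ^ 2
            ≤ (N:ℝ)⁻¹ * ∑ i, ‖P.g i (S.xbar r ω) - P.g i (S.x r i ω)‖ ^ 2 :=
              my_norm_avg_sq_le P.hN _
          _ ≤ (N:ℝ)⁻¹ * ∑ i, P.L ^ 2 * ‖S.x r i ω - S.xbar r ω‖ ^ 2 := by
              gcongr with i _
              have := P.hsmooth i (S.xbar r ω) (S.x r i ω)
              rw [norm_sub_rev (S.x r i ω)]
              have hn := norm_nonneg (P.g i (S.xbar r ω) - P.g i (S.x r i ω))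
              nlinarith [norm_nonneg (S.xbar r ω - S.x r i ω), P.hL.le]
          _ = P.L ^ 2 * ((N:ℝ)⁻¹ * ∑ i, ‖S.x r i ω - S.xbar r ω‖ ^ 2) := by
              rw [← Finset.mul_sum]; ring
      have := my_key_ineq (A ω) (Y ω) (S.hbar r ω) h1 h2
      linarith
    have hJ1 : Integrable (fun ω => P.L ^ 2 * ‖S.xbar r ω - S.zbar r ω‖ ^ 2) P.μ :=
      hZsq.const_mul _
    have hJ2 : Integrable (fun ω =>
        3/4 * (P.L ^ 2 * ((N:ℝ)⁻¹ * ∑ i, ‖S.x r i ω - S.xbar r ω‖ ^ 2))) P.μ := by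
      have := (hQint.const_mul (P.L ^ 2)).const_mul (3/4 : ℝ)
      simpa [mul_assoc] using this
    have hJ3 : Integrable (fun ω => 1/4 * ‖A ω‖ ^ 2) P.μ := hAsq.const_mul _
    have hJ4 : Integrable (fun ω => 3/8 * ‖S.hbar r ω‖ ^ 2) P.μ := hhsq.const_mul _
    have hJ12 : Integrable (fun ω => P.L ^ 2 * ‖S.xbar r ω - S.zbar r ω‖ ^ 2
        + 3/4 * (P.L ^ 2 * ((N:ℝ)⁻¹ * ∑ i, ‖S.x r i ω - S.xbar r ω‖ ^ 2))) P.μ := hJ1.add hJ2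
    have hJ123 : Integrable (fun ω => P.L ^ 2 * ‖S.xbar r ω - S.zbar r ω‖ ^ 2
        + 3/4 * (P.L ^ 2 * ((N:ℝ)⁻¹ * ∑ i, ‖S.x r i ω - S.xbar r ω‖ ^ 2))
        - 1/4 * ‖A ω‖ ^ 2) P.μ := hJ12.sub hJ3
    have hRint : Integrable (fun ω => P.L ^ 2 * ‖S.xbar r ω - S.zbar r ω‖ ^ 2
        + 3/4 * (P.L ^ 2 * ((N:ℝ)⁻¹ * ∑ i, ‖S.x r i ω - S.xbar r ω‖ ^ 2))
        - 1/4 * ‖A ω‖ ^ 2 - 3/8 * ‖S.hbar r ω‖ ^ 2) P.μ := hJ123.sub hJ4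
    have hneg : Integrable (fun ω => -(inner ℝ (Y ω) (S.hbar r ω) : ℝ)) P.μ := hYh.neg
    have hmono := integral_mono hneg hRint (fun ω => hptw ω)
    rw [integral_neg] at hmono
    calc -IYh ≤ ∫ ω, (P.L ^ 2 * ‖S.xbar r ω - S.zbar r ω‖ ^ 2
          + 3/4 * (P.L ^ 2 * ((N:ℝ)⁻¹ * ∑ i, ‖S.x r i ω - S.xbar r ω‖ ^ 2))
          - 1/4 * ‖A ω‖ ^ 2 - 3/8 * ‖S.hbar r ω‖ ^ 2) ∂P.μ := hmono
      _ = P.L ^ 2 * IZ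
          + 3/4 * (P.L ^ 2 * ((N:ℝ)⁻¹ * ∫ ω, (∑ i, ‖S.x r i ω - S.xbar r ω‖ ^ 2) ∂P.μ))
          - 1/4 * IA - 3/8 * Ih := by
        rw [integral_sub hJ123 hJ4, integral_sub hJ12 hJ3, integral_add hJ1 hJ2]
        simp only [MeasureTheory.integral_const_mul]
        rfl
  -- positivity facts
  have hIh0 : 0 ≤ Ih := integral_nonneg fun ω => sq_nonneg _
  have hIn0 : 0 ≤ In := integral_nonneg fun ω => sq_nonneg _
  have hIQ0 : 0 ≤ ∫ ω, (∑ i, ‖S.x r i ω - S.xbar r ω‖ ^ 2) ∂P.μ :=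
    integral_nonneg fun ω => Finset.sum_nonneg fun i _ => sq_nonneg _
  -- final arithmetic
  have hXi : S.Xi r = (N:ℝ)⁻¹ * ∫ ω, (∑ i, ‖S.x r i ω - S.xbar r ω‖ ^ 2) ∂P.μ := rfl
  rw [hXi, show (∫ ω, ‖(N : ℝ)⁻¹ • ∑ i, P.g i (S.x r i ω)‖ ^ 2 ∂P.μ) = Ih from rfl]
  set IQ : ℝ := ∫ ω, (∑ i, ‖S.x r i ω - S.xbar r ω‖ ^ 2) ∂P.μ with hIQ
  have hM1 : γ * (-IYh) ≤ γ * (P.L ^ 2 * IZ + 3/4 * (P.L ^ 2 * ((N:ℝ)⁻¹ * IQ))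
      - 1/4 * IA - 3/8 * Ih) := mul_le_mul_of_nonneg_left s4 hγpos.le
  have h8 : P.L / 2 * γ ^ 2 - γ / 8 ≤ 0 := by nlinarith [hγL, hγpos.le, sq_nonneg γ]
  have h9 : (P.L / 2 * γ ^ 2 - γ / 8) * Ih ≤ 0 := mul_nonpos_of_nonpos_of_nonneg h8 hIh0
  have h10 : (P.L / 2 * γ ^ 2) * In ≤ (P.L / 2 * γ ^ 2) * (P.σ ^ 2 / N) := by
    have hc : (0:ℝ) ≤ P.L / 2 * γ ^ 2 :=
      mul_nonneg (by linarith [P.hL.le]) (sq_nonneg γ)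
    exact mul_le_mul_of_nonneg_left s3b hc
  have h11 : 0 ≤ γ * (P.L ^ 2 * ((N:ℝ)⁻¹ * IQ)) :=
    mul_nonneg hγpos.le (mul_nonneg (sq_nonneg _)
      (mul_nonneg (inv_nonneg.mpr hNpos.le) hIQ0))
  have hc1 : P.L ^ 2 * S.η / (1 - P.β) = P.L ^ 2 * γ := by
    rw [hγdef]; ring
  have hc2 : S.η / (4 * (1 - P.β)) = γ / 4 := by
    rw [hγdef]; field_simp
  have hc3 : P.L * P.σ ^ 2 * S.η ^ 2 / (2 * (N : ℝ) * (1 - P.β) ^ 2)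
      = (P.L / 2 * γ ^ 2) * (P.σ ^ 2 / N) := by
    rw [hγdef]; field_simp
  rw [hc1, hc2, hc3]
  nlinarith [s1, hM1, h9, h10, h11, hIn0, hIh0]


end
end

section
/- (Lemma: recursion for the consensus distance Ξ) Under the lower-bound, mixing, smoothness, and bounded-variance assumptions, for every round r ≥ 0 the Momentum Tracking iterates satisfy Ξ^{(r+1)} ≤ (1 − p/2) Ξ^{(r)} + (9/p)η² ℰ^{(r)} + (9/(Np))η² E‖U^{(r+1)} − D^{(r+1)}‖_F² + (9/(Np))η² E‖E^{(r+1)}‖_F². -/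
open MeasureTheory
open scoped BigOperators

noncomputable section

section AuxLemmas

variable {E : Type*} [NormedAddCommGroup E] [InnerProductSpace ℝ E]

omit [InnerProductSpace ℝ E] in
lemma young_sq' (a b : E) {α : ℝ} (hα : 0 < α) :
    ‖a + b‖ ^ 2 ≤ (1 + α) * ‖a‖ ^ 2 + (1 + α⁻¹) * ‖b‖ ^ 2 := by
  have h : ‖a + b‖ ^ 2 ≤ (‖a‖ + ‖b‖) ^ 2 :=
    pow_le_pow_left₀ (norm_nonneg _) (norm_add_le a b) 2
  have hα' : α * α⁻¹ = 1 := mul_inv_cancel₀ hα.ne'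
  have hinv : 0 ≤ α⁻¹ := (inv_pos.mpr hα).le
  nlinarith [sq_nonneg (α * ‖a‖ - ‖b‖), mul_nonneg hinv (sq_nonneg (α * ‖a‖ - ‖b‖)),
    norm_nonneg a, norm_nonneg b]

omit [InnerProductSpace ℝ E] in
lemma three_sq' (a b c : E) : ‖a + b + c‖ ^ 2 ≤ 3 * (‖a‖ ^ 2 + ‖b‖ ^ 2 + ‖c‖ ^ 2) := by
  have h : ‖a + b + c‖ ^ 2 ≤ (‖a‖ + ‖b‖ + ‖c‖) ^ 2 :=
    pow_le_pow_left₀ (norm_nonneg _) (norm_add₃_le) 2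
  nlinarith [sq_nonneg (‖a‖ - ‖b‖), sq_nonneg (‖a‖ - ‖c‖), sq_nonneg (‖b‖ - ‖c‖)]

lemma mean_min' {N : ℕ} (hN : 0 < N) (v : Fin N → E) (z : E) :
    ∑ i, ‖v i - (N : ℝ)⁻¹ • ∑ j, v j‖ ^ 2 ≤ ∑ i, ‖v i - z‖ ^ 2 := by
  set m : E := (N : ℝ)⁻¹ • ∑ j, v j with hm
  have hsum : ∑ i, (v i - m) = 0 := by
    rw [Finset.sum_sub_distrib, Finset.sum_const, Finset.card_univ, Fintype.card_fin, hm,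
      ← Nat.cast_smul_eq_nsmul ℝ, smul_smul]
    have h1 : (N : ℝ) * (N : ℝ)⁻¹ = 1 := by
      field_simp
    rw [h1, one_smul, sub_self]
  have key : ∀ i, ‖v i - z‖ ^ 2
      = ‖v i - m‖ ^ 2 + 2 * (inner ℝ (v i - m) (m - z) : ℝ) + ‖m - z‖ ^ 2 := by
    intro i
    rw [show v i - z = (v i - m) + (m - z) by abel]
    exact norm_add_sq_real _ _
  calc ∑ i, ‖v i - m‖ ^ 2
      ≤ ∑ i, ‖v i - m‖ ^ 2 + (2 * (inner ℝ (∑ i, (v i - m)) (m - z) : ℝ)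
          + (N : ℝ) * ‖m - z‖ ^ 2) := by
        rw [hsum]
        simp only [inner_zero_left, mul_zero, zero_add]
        have : 0 ≤ (N : ℝ) * ‖m - z‖ ^ 2 := by positivity
        linarith
    _ = ∑ i, ‖v i - z‖ ^ 2 := by
        rw [Finset.sum_congr rfl fun i _ => key i, Finset.sum_add_distrib,
          Finset.sum_add_distrib, sum_inner, Finset.sum_const, Finset.card_univ,
          Fintype.card_fin, nsmul_eq_mul, ← Finset.mul_sum]
        ring

lemma step_bound' {p η : ℝ} (hp0 : 0 < p) (hp1 : p ≤ 1) (y a b c : E) :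
    ‖y + (-η) • (a + b + c)‖ ^ 2
      ≤ (1 + p / (2 - p)) * ‖y‖ ^ 2
        + 9 / p * η ^ 2 * ‖a‖ ^ 2 + 9 / p * η ^ 2 * ‖b‖ ^ 2
        + 9 / p * η ^ 2 * ‖c‖ ^ 2 := by
  have h2p : 0 < 2 - p := by linarith
  have hα : 0 < p / (2 - p) := div_pos hp0 h2p
  have h1 := young_sq' y ((-η) • (a + b + c)) hα
  have hinv : (p / (2 - p))⁻¹ = (2 - p) / p := by rw [inv_div]
  have hco : 1 + (p / (2 - p))⁻¹ = 2 / p := by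
    rw [hinv]; field_simp; ring
  have hsm : ‖(-η) • (a + b + c)‖ ^ 2 = η ^ 2 * ‖a + b + c‖ ^ 2 := by
    rw [norm_smul, mul_pow, Real.norm_eq_abs, sq_abs]
    ring_nf
  have h3 := three_sq' a b c
  have hη2 : (0:ℝ) ≤ η ^ 2 := sq_nonneg _
  have hmain : (2 / p) * (η ^ 2 * ‖a + b + c‖ ^ 2)
      ≤ 9 / p * η ^ 2 * ‖a‖ ^ 2 + 9 / p * η ^ 2 * ‖b‖ ^ 2 + 9 / p * η ^ 2 * ‖c‖ ^ 2 := by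
    have hb1 : (2 / p) * (η ^ 2 * ‖a + b + c‖ ^ 2)
        ≤ (2 / p) * (η ^ 2 * (3 * (‖a‖ ^ 2 + ‖b‖ ^ 2 + ‖c‖ ^ 2))) := by
      apply mul_le_mul_of_nonneg_left _ (by positivity)
      exact mul_le_mul_of_nonneg_left h3 hη2
    have hb2 : (2 / p) * (η ^ 2 * (3 * (‖a‖ ^ 2 + ‖b‖ ^ 2 + ‖c‖ ^ 2)))
        = (6 / p) * (η ^ 2 * (‖a‖ ^ 2 + ‖b‖ ^ 2 + ‖c‖ ^ 2)) := by ring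
    have hb3 : (6 / p) * (η ^ 2 * (‖a‖ ^ 2 + ‖b‖ ^ 2 + ‖c‖ ^ 2))
        ≤ (9 / p) * (η ^ 2 * (‖a‖ ^ 2 + ‖b‖ ^ 2 + ‖c‖ ^ 2)) := by
      apply mul_le_mul_of_nonneg_right _ (by positivity)
      gcongr
      norm_num
    calc (2 / p) * (η ^ 2 * ‖a + b + c‖ ^ 2)
        ≤ (6 / p) * (η ^ 2 * (‖a‖ ^ 2 + ‖b‖ ^ 2 + ‖c‖ ^ 2)) := hb2 ▸ hb1
      _ ≤ (9 / p) * (η ^ 2 * (‖a‖ ^ 2 + ‖b‖ ^ 2 + ‖c‖ ^ 2)) := hb3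
      _ = _ := by ring
  calc ‖y + (-η) • (a + b + c)‖ ^ 2
      ≤ (1 + p / (2 - p)) * ‖y‖ ^ 2 + (1 + (p / (2 - p))⁻¹) * ‖(-η) • (a + b + c)‖ ^ 2 := h1
    _ = (1 + p / (2 - p)) * ‖y‖ ^ 2 + (2 / p) * (η ^ 2 * ‖a + b + c‖ ^ 2) := by
        rw [hco, hsm]
    _ ≤ _ := by linarith

lemma coeff_bound' {p : ℝ} (hp0 : 0 < p) (hp1 : p ≤ 1) :
    (1 + p / (2 - p)) * (1 - p) ≤ 1 - p / 2 := by
  have h2p : 0 < 2 - p := by linarith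
  have hq : p / (2 - p) * (2 - p) = p := div_mul_cancel₀ _ h2p.ne'
  have hq0 : 0 ≤ p / (2 - p) := (div_pos hp0 h2p).le
  nlinarith [mul_nonneg hq0 hp0.le]

end AuxLemmas

section MemAux

variable {N d : ℕ} {Ω : Type} [mΩ : MeasurableSpace Ω] {P : MTProblem N d Ω}

lemma memℒp_g_comp {f : Ω → EuclideanSpace ℝ (Fin d)} (hf : MemLp f 2 P.μ) (i : Fin N) :
    MemLp (fun ω => P.g i (f ω)) 2 P.μ := by
  haveI := P.prob
  have hlip : LipschitzWith (Real.toNNReal P.L) (P.g i) :=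
    LipschitzWith.of_dist_le_mul fun v w => by
      simpa [dist_eq_norm, Real.coe_toNNReal _ P.hL.le] using P.hsmooth i v w
  have hmeas : AEStronglyMeasurable (fun ω => P.g i (f ω)) P.μ :=
    hlip.continuous.comp_aestronglyMeasurable hf.aestronglyMeasurable
  have hbd : MemLp (fun ω => ‖P.g i 0‖ + P.L * ‖f ω‖) 2 P.μ :=
    (memLp_const ‖P.g i 0‖).add (hf.norm.const_mul P.L)
  refine hbd.of_le hmeas (ae_of_all _ fun ω => ?_)
  have h1 : ‖P.g i (f ω)‖ ≤ ‖P.g i 0‖ + P.L * ‖f ω‖ := by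
    have h2 := P.hsmooth i (f ω) 0
    have h3 := norm_sub_norm_le (P.g i (f ω)) (P.g i 0)
    rw [sub_zero] at h2
    linarith
  rw [Real.norm_eq_abs]
  exact h1.trans (le_abs_self _)

lemma memℒp_gradF_comp {f : Ω → EuclideanSpace ℝ (Fin d)} (hf : MemLp f 2 P.μ) :
    MemLp (fun ω => P.gradF (f ω)) 2 P.μ := by
  haveI := P.prob
  show MemLp (fun ω => (N : ℝ)⁻¹ • ∑ i, P.g i (f ω)) 2 P.μ
  exact (memLp_finset_sum Finset.univ fun i _ => memℒp_g_comp hf i).const_smul (_ : ℝ)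

lemma memℒp_xuc (S : MTRun P) :
    ∀ r, (∀ i, MemLp (S.x r i) 2 P.μ) ∧ (∀ i, MemLp (S.u r i) 2 P.μ)
      ∧ (∀ i, MemLp (S.c r i) 2 P.μ) := by
  haveI := P.prob
  intro r
  induction r with
  | zero =>
    have hu : ∀ i, MemLp (S.u 0 i) 2 P.μ := by
      intro i
      have he : S.u 0 i
          = fun ω => (1 - P.β)⁻¹ • (S.G 0 i ω - (N : ℝ)⁻¹ • ∑ j, S.G 0 j ω) :=
        funext fun ω => S.hu0 i ω
      rw [he]
      exact (((S.hmeas 0 i).sub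
        ((memLp_finset_sum Finset.univ fun j _ => S.hmeas 0 j).const_smul (_ : ℝ))).const_smul (_ : ℝ))
    refine ⟨fun i => ?_, hu, fun i => ?_⟩
    · rw [S.hx0 i]; exact memLp_const _
    · rw [S.hc0 i]; exact hu i
  | succ r ih =>
    obtain ⟨hx, hu, hc⟩ := ih
    have hu' : ∀ i, MemLp (S.u (r + 1) i) 2 P.μ := fun i => by
      have he : S.u (r + 1) i = fun ω => P.β • S.u r i ω + S.G r i ω :=
        funext fun ω => S.hu r i ω
      rw [he]
      exact ((hu i).const_smul (_ : ℝ)).add (S.hmeas r i)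
    refine ⟨fun i => ?_, hu', fun i => ?_⟩
    · have he : S.x (r + 1) i
          = fun ω => (∑ j, P.W i j • S.x r j ω) - S.η • (S.u (r + 1) i ω - S.c r i ω) :=
        funext fun ω => S.hx r i ω
      rw [he]
      exact (memLp_finset_sum Finset.univ fun j _ => (hx j).const_smul (_ : ℝ)).sub
        (((hu' i).sub (hc i)).const_smul (_ : ℝ))
    · have he : S.c (r + 1) i
          = fun ω => (∑ j, P.W i j • (S.c r j ω - S.u (r + 1) j ω)) + S.u (r + 1) i ω :=
        funext fun ω => S.hc r i ω
      rw [he]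
      exact (memLp_finset_sum Finset.univ fun j _ =>
        ((hc j).sub (hu' j)).const_smul (_ : ℝ)).add (hu' i)

lemma memℒp_xbar (S : MTRun P) (r : ℕ) : MemLp (S.xbar r) 2 P.μ := by
  haveI := P.prob
  show MemLp (fun ω => (N : ℝ)⁻¹ • ∑ i, S.x r i ω) 2 P.μ
  exact (memLp_finset_sum Finset.univ fun i _ => (memℒp_xuc S r).1 i).const_smul (_ : ℝ)

lemma memℒp_de (S : MTRun P) :
    ∀ r, (∀ i, MemLp (S.dseq r i) 2 P.μ) ∧ (∀ i, MemLp (S.eseq r i) 2 P.μ) := by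
  haveI := P.prob
  intro r
  induction r with
  | zero =>
    constructor
    · intro i
      show MemLp (fun ω => (1 - P.β)⁻¹ • (P.g i (S.xbar 0 ω) - P.gradF (S.xbar 0 ω))) 2 P.μ
      exact ((memℒp_g_comp (memℒp_xbar S 0) i).sub (memℒp_gradF_comp (memℒp_xbar S 0))).const_smul (_ : ℝ)
    · intro i
      show MemLp (fun _ => (0 : EuclideanSpace ℝ (Fin d))) 2 P.μ
      exact memLp_const _
  | succ r ih =>
    obtain ⟨hd, he⟩ := ih
    constructor
    · intro i
      show MemLp (fun ω => P.β • S.dseq r i ω + P.g i (S.xbar r ω)) 2 P.μ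
      exact ((hd i).const_smul (_ : ℝ)).add (memℒp_g_comp (memℒp_xbar S r) i)
    · intro i
      show MemLp (fun ω => P.β • S.eseq r i ω + P.gradF (S.xbar r ω)) 2 P.μ
      exact ((he i).const_smul (_ : ℝ)).add (memℒp_gradF_comp (memℒp_xbar S r))

lemma int_sq' {f : Ω → EuclideanSpace ℝ (Fin d)} (hf : MemLp f 2 P.μ) :
    Integrable (fun ω => ‖f ω‖ ^ 2) P.μ :=
  (memLp_two_iff_integrable_sq_norm hf.aestronglyMeasurable).1 hf

end MemAux

/-- **Lemma** (recursion for the consensus distance `Ξ`): for every round `r ≥ 0`,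
`Ξ^{(r+1)} ≤ (1 − p/2) Ξ^{(r)} + (9/p)η² ℰ^{(r)} + (9/(Np))η² E‖U^{(r+1)} − D^{(r+1)}‖_F²
  + (9/(Np))η² E‖E^{(r+1)}‖_F²`. -/
theorem consensus_distance_recursion
    (N d : ℕ) (Ω : Type) [mΩ : MeasurableSpace Ω]
    (P : MTProblem N d Ω) (S : MTRun P) :
    ∀ r : ℕ,
      S.Xi (r + 1) ≤
        (1 - P.p / 2) * S.Xi r
          + 9 / P.p * S.η ^ 2 * S.EE r
          + 9 / ((N : ℝ) * P.p) * S.η ^ 2 *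
              ∫ ω, (∑ i, ‖S.u (r + 1) i ω - S.dseq (r + 1) i ω‖ ^ 2) ∂P.μ
          + 9 / ((N : ℝ) * P.p) * S.η ^ 2 *
              ∫ ω, (∑ i, ‖S.eseq (r + 1) i ω‖ ^ 2) ∂P.μ := by
  haveI := P.prob
  intro r
  have hN0 : (0 : ℝ) < N := by exact_mod_cast P.hN
  obtain ⟨hxr, hur, hcr⟩ := memℒp_xuc S r
  have hu1 := (memℒp_xuc S (r + 1)).2.1
  have hd1 := (memℒp_de S (r + 1)).1
  have he1 := (memℒp_de S (r + 1)).2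
  have hxb := memℒp_xbar S r
  -- integrability of the four sums
  have iX : Integrable (fun ω => ∑ i, ‖S.x r i ω - S.xbar r ω‖ ^ 2) P.μ :=
    integrable_finset_sum _ fun i _ => int_sq' ((hxr i).sub hxb)
  have iA : Integrable (fun ω => ∑ i, ‖S.u (r + 1) i ω - S.dseq (r + 1) i ω‖ ^ 2) P.μ :=
    integrable_finset_sum _ fun i _ => int_sq' ((hu1 i).sub (hd1 i))
  have iB : Integrable
      (fun ω => ∑ i, ‖S.dseq (r + 1) i ω - S.c r i ω - S.eseq (r + 1) i ω‖ ^ 2) P.μ :=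
    integrable_finset_sum _ fun i _ => int_sq' (((hd1 i).sub (hcr i)).sub (he1 i))
  have iC : Integrable (fun ω => ∑ i, ‖S.eseq (r + 1) i ω‖ ^ 2) P.μ :=
    integrable_finset_sum _ fun i _ => int_sq' (he1 i)
  -- pointwise inequality
  have hpt : ∀ ω, (∑ i, ‖S.x (r + 1) i ω - S.xbar (r + 1) ω‖ ^ 2)
      ≤ (1 - P.p / 2) * (∑ i, ‖S.x r i ω - S.xbar r ω‖ ^ 2)
        + 9 / P.p * S.η ^ 2
            * (∑ i, ‖S.dseq (r + 1) i ω - S.c r i ω - S.eseq (r + 1) i ω‖ ^ 2)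
        + 9 / P.p * S.η ^ 2 * (∑ i, ‖S.u (r + 1) i ω - S.dseq (r + 1) i ω‖ ^ 2)
        + 9 / P.p * S.η ^ 2 * (∑ i, ‖S.eseq (r + 1) i ω‖ ^ 2) := by
    intro ω
    have h0 : (∑ i, ‖S.x (r + 1) i ω - S.xbar (r + 1) ω‖ ^ 2)
        ≤ ∑ i, ‖S.x (r + 1) i ω - S.xbar r ω‖ ^ 2 :=
      mean_min' P.hN (fun i => S.x (r + 1) i ω) (S.xbar r ω)
    have h1 : ∀ i, ‖S.x (r + 1) i ω - S.xbar r ω‖ ^ 2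
        ≤ (1 + P.p / (2 - P.p)) * ‖(∑ j, P.W i j • S.x r j ω) - S.xbar r ω‖ ^ 2
          + 9 / P.p * S.η ^ 2 * ‖S.u (r + 1) i ω - S.dseq (r + 1) i ω‖ ^ 2
          + 9 / P.p * S.η ^ 2
              * ‖S.dseq (r + 1) i ω - S.c r i ω - S.eseq (r + 1) i ω‖ ^ 2
          + 9 / P.p * S.η ^ 2 * ‖S.eseq (r + 1) i ω‖ ^ 2 := by
      intro i
      have habc : (S.u (r + 1) i ω - S.dseq (r + 1) i ω)
            + (S.dseq (r + 1) i ω - S.c r i ω - S.eseq (r + 1) i ω)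
            + S.eseq (r + 1) i ω = S.u (r + 1) i ω - S.c r i ω := by abel
      have hdec : S.x (r + 1) i ω - S.xbar r ω
          = ((∑ j, P.W i j • S.x r j ω) - S.xbar r ω)
            + (-S.η) • ((S.u (r + 1) i ω - S.dseq (r + 1) i ω)
                + (S.dseq (r + 1) i ω - S.c r i ω - S.eseq (r + 1) i ω)
                + S.eseq (r + 1) i ω) := by
        rw [S.hx r i ω, habc, neg_smul]
        abel
      rw [hdec]
      exact step_bound' P.hp0 P.hp1 _ _ _ _
    have h2 : ∑ i, ‖S.x (r + 1) i ω - S.xbar r ω‖ ^ 2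
        ≤ (1 + P.p / (2 - P.p))
              * (∑ i, ‖(∑ j, P.W i j • S.x r j ω) - S.xbar r ω‖ ^ 2)
          + 9 / P.p * S.η ^ 2 * (∑ i, ‖S.u (r + 1) i ω - S.dseq (r + 1) i ω‖ ^ 2)
          + 9 / P.p * S.η ^ 2
              * (∑ i, ‖S.dseq (r + 1) i ω - S.c r i ω - S.eseq (r + 1) i ω‖ ^ 2)
          + 9 / P.p * S.η ^ 2 * (∑ i, ‖S.eseq (r + 1) i ω‖ ^ 2) := by
      calc ∑ i, ‖S.x (r + 1) i ω - S.xbar r ω‖ ^ 2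
          ≤ ∑ i, ((1 + P.p / (2 - P.p)) * ‖(∑ j, P.W i j • S.x r j ω) - S.xbar r ω‖ ^ 2
              + 9 / P.p * S.η ^ 2 * ‖S.u (r + 1) i ω - S.dseq (r + 1) i ω‖ ^ 2
              + 9 / P.p * S.η ^ 2
                  * ‖S.dseq (r + 1) i ω - S.c r i ω - S.eseq (r + 1) i ω‖ ^ 2
              + 9 / P.p * S.η ^ 2 * ‖S.eseq (r + 1) i ω‖ ^ 2) :=
            Finset.sum_le_sum fun i _ => h1 i
        _ = _ := by
            simp only [Finset.sum_add_distrib, ← Finset.mul_sum]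
    have hmixed : ∑ i, ‖(∑ j, P.W i j • S.x r j ω) - S.xbar r ω‖ ^ 2
        ≤ (1 - P.p) * ∑ i, ‖S.x r i ω - S.xbar r ω‖ ^ 2 := by
      have hm := P.hmix fun j => S.x r j ω
      have hrw : ∀ i : Fin N, (∑ j, P.W i j • S.x r j ω) = ∑ j, P.W j i • S.x r j ω :=
        fun i => Finset.sum_congr rfl fun j _ => by rw [P.hWsymm i j]
      calc ∑ i, ‖(∑ j, P.W i j • S.x r j ω) - S.xbar r ω‖ ^ 2
          = ∑ i, ‖(∑ j, P.W j i • S.x r j ω) - (N : ℝ)⁻¹ • ∑ j, S.x r j ω‖ ^ 2 :=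
            Finset.sum_congr rfl fun i _ => by rw [hrw i]; rfl
        _ ≤ (1 - P.p) * ∑ i, ‖S.x r i ω - (N : ℝ)⁻¹ • ∑ j, S.x r j ω‖ ^ 2 := hm
        _ = (1 - P.p) * ∑ i, ‖S.x r i ω - S.xbar r ω‖ ^ 2 := rfl
    have halpha : (0 : ℝ) ≤ 1 + P.p / (2 - P.p) := by
      have h2p : (0 : ℝ) < 2 - P.p := by linarith [P.hp1]
      have := (div_pos P.hp0 h2p).le
      linarith
    have hSx0 : (0 : ℝ) ≤ ∑ i, ‖S.x r i ω - S.xbar r ω‖ ^ 2 :=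
      Finset.sum_nonneg fun i _ => sq_nonneg _
    have h3 : (1 + P.p / (2 - P.p))
          * (∑ i, ‖(∑ j, P.W i j • S.x r j ω) - S.xbar r ω‖ ^ 2)
        ≤ (1 - P.p / 2) * ∑ i, ‖S.x r i ω - S.xbar r ω‖ ^ 2 := by
      calc (1 + P.p / (2 - P.p))
            * (∑ i, ‖(∑ j, P.W i j • S.x r j ω) - S.xbar r ω‖ ^ 2)
          ≤ (1 + P.p / (2 - P.p))
              * ((1 - P.p) * ∑ i, ‖S.x r i ω - S.xbar r ω‖ ^ 2) :=
            mul_le_mul_of_nonneg_left hmixed halpha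
        _ = ((1 + P.p / (2 - P.p)) * (1 - P.p)) * ∑ i, ‖S.x r i ω - S.xbar r ω‖ ^ 2 := by
            ring
        _ ≤ (1 - P.p / 2) * ∑ i, ‖S.x r i ω - S.xbar r ω‖ ^ 2 :=
            mul_le_mul_of_nonneg_right (coeff_bound' P.hp0 P.hp1) hSx0
    linarith
  -- integrate
  have hRHSint : Integrable (fun ω =>
      (1 - P.p / 2) * (∑ i, ‖S.x r i ω - S.xbar r ω‖ ^ 2)
        + 9 / P.p * S.η ^ 2
            * (∑ i, ‖S.dseq (r + 1) i ω - S.c r i ω - S.eseq (r + 1) i ω‖ ^ 2)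
        + 9 / P.p * S.η ^ 2 * (∑ i, ‖S.u (r + 1) i ω - S.dseq (r + 1) i ω‖ ^ 2)
        + 9 / P.p * S.η ^ 2 * (∑ i, ‖S.eseq (r + 1) i ω‖ ^ 2)) P.μ :=
    (((iX.const_mul _).add (iB.const_mul _)).add (iA.const_mul _)).add (iC.const_mul _)
  have hI : ∫ ω, (∑ i, ‖S.x (r + 1) i ω - S.xbar (r + 1) ω‖ ^ 2) ∂P.μ
      ≤ ∫ ω, ((1 - P.p / 2) * (∑ i, ‖S.x r i ω - S.xbar r ω‖ ^ 2)
          + 9 / P.p * S.η ^ 2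
              * (∑ i, ‖S.dseq (r + 1) i ω - S.c r i ω - S.eseq (r + 1) i ω‖ ^ 2)
          + 9 / P.p * S.η ^ 2 * (∑ i, ‖S.u (r + 1) i ω - S.dseq (r + 1) i ω‖ ^ 2)
          + 9 / P.p * S.η ^ 2 * (∑ i, ‖S.eseq (r + 1) i ω‖ ^ 2)) ∂P.μ :=
    integral_mono_of_nonneg
      (ae_of_all _ fun ω => Finset.sum_nonneg fun i _ => sq_nonneg _)
      hRHSint (ae_of_all _ hpt)
  have hsplit : ∫ ω, ((1 - P.p / 2) * (∑ i, ‖S.x r i ω - S.xbar r ω‖ ^ 2)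
        + 9 / P.p * S.η ^ 2
            * (∑ i, ‖S.dseq (r + 1) i ω - S.c r i ω - S.eseq (r + 1) i ω‖ ^ 2)
        + 9 / P.p * S.η ^ 2 * (∑ i, ‖S.u (r + 1) i ω - S.dseq (r + 1) i ω‖ ^ 2)
        + 9 / P.p * S.η ^ 2 * (∑ i, ‖S.eseq (r + 1) i ω‖ ^ 2)) ∂P.μ
      = (1 - P.p / 2) * (∫ ω, (∑ i, ‖S.x r i ω - S.xbar r ω‖ ^ 2) ∂P.μ)
        + 9 / P.p * S.η ^ 2
            * (∫ ω, (∑ i, ‖S.dseq (r + 1) i ω - S.c r i ω - S.eseq (r + 1) i ω‖ ^ 2) ∂P.μ)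
        + 9 / P.p * S.η ^ 2
            * (∫ ω, (∑ i, ‖S.u (r + 1) i ω - S.dseq (r + 1) i ω‖ ^ 2) ∂P.μ)
        + 9 / P.p * S.η ^ 2 * (∫ ω, (∑ i, ‖S.eseq (r + 1) i ω‖ ^ 2) ∂P.μ) := by
    have t1 : Integrable (fun ω => (1 - P.p / 2) * (∑ i, ‖S.x r i ω - S.xbar r ω‖ ^ 2)) P.μ :=
      iX.const_mul _
    have t2 : Integrable (fun ω => 9 / P.p * S.η ^ 2
        * (∑ i, ‖S.dseq (r + 1) i ω - S.c r i ω - S.eseq (r + 1) i ω‖ ^ 2)) P.μ :=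
      iB.const_mul _
    have t3 : Integrable (fun ω => 9 / P.p * S.η ^ 2
        * (∑ i, ‖S.u (r + 1) i ω - S.dseq (r + 1) i ω‖ ^ 2)) P.μ := iA.const_mul _
    have t4 : Integrable (fun ω => 9 / P.p * S.η ^ 2
        * (∑ i, ‖S.eseq (r + 1) i ω‖ ^ 2)) P.μ := iC.const_mul _
    have t12 : Integrable (fun ω => (1 - P.p / 2) * (∑ i, ‖S.x r i ω - S.xbar r ω‖ ^ 2)
        + 9 / P.p * S.η ^ 2
            * (∑ i, ‖S.dseq (r + 1) i ω - S.c r i ω - S.eseq (r + 1) i ω‖ ^ 2)) P.μ :=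
      t1.add t2
    have t123 : Integrable (fun ω => (1 - P.p / 2) * (∑ i, ‖S.x r i ω - S.xbar r ω‖ ^ 2)
        + 9 / P.p * S.η ^ 2
            * (∑ i, ‖S.dseq (r + 1) i ω - S.c r i ω - S.eseq (r + 1) i ω‖ ^ 2)
        + 9 / P.p * S.η ^ 2 * (∑ i, ‖S.u (r + 1) i ω - S.dseq (r + 1) i ω‖ ^ 2)) P.μ :=
      t12.add t3
    rw [integral_add t123 t4, integral_add t12 t3, integral_add t1 t2,
      integral_const_mul, integral_const_mul, integral_const_mul, integral_const_mul]
  have hcoef : 9 / ((N : ℝ) * P.p) = (N : ℝ)⁻¹ * (9 / P.p) := by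
    rw [div_eq_mul_inv, div_eq_mul_inv, mul_inv]
    ring
  calc S.Xi (r + 1)
      = (N : ℝ)⁻¹ * ∫ ω, (∑ i, ‖S.x (r + 1) i ω - S.xbar (r + 1) ω‖ ^ 2) ∂P.μ := rfl
    _ ≤ (N : ℝ)⁻¹ * ((1 - P.p / 2) * (∫ ω, (∑ i, ‖S.x r i ω - S.xbar r ω‖ ^ 2) ∂P.μ)
          + 9 / P.p * S.η ^ 2
              * (∫ ω, (∑ i, ‖S.dseq (r + 1) i ω - S.c r i ω - S.eseq (r + 1) i ω‖ ^ 2) ∂P.μ)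
          + 9 / P.p * S.η ^ 2
              * (∫ ω, (∑ i, ‖S.u (r + 1) i ω - S.dseq (r + 1) i ω‖ ^ 2) ∂P.μ)
          + 9 / P.p * S.η ^ 2 * (∫ ω, (∑ i, ‖S.eseq (r + 1) i ω‖ ^ 2) ∂P.μ)) := by
        rw [← hsplit]
        exact mul_le_mul_of_nonneg_left hI (by positivity)
    _ = _ := by
        simp only [MTRun.Xi, MTRun.EE, hcoef]
        ring


end
end

section
/- (Lemma: recursion for the tracking error ℰ) Under the lower-bound, mixing, smoothness, and bounded-variance assumptions, for every round r ≥ 0 the Momentum Tracking iterates satisfy ℰ^{(r+1)} ≤ (1 − p/2) ℰ^{(r)} + (18β²/p) 𝒟^{(r)} + (24/(Np)) E‖U^{(r+1)} − D^{(r+1)}‖_F² + (144L⁴/p)η² Ξ^{(r)} + (72β²L²/p)η² E‖ū^{(r)}‖² + (144L²/p)η² E‖∇f(x̄^{(r)})‖² + 36L²σ²η²/(Np). -/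
open MeasureTheory
open scoped BigOperators

noncomputable section

/-! ### Auxiliary lemmas for the tracking-error recursion -/

section TrackingAux

-- general inequalities

theorem MT_young_ineq {E : Type*} [NormedAddCommGroup E] (a b : E) {α : ℝ} (hα : 0 < α) :
    ‖a + b‖^2 ≤ (1+α)*‖a‖^2 + (1+α⁻¹)*‖b‖^2 := by
  have h1 : ‖a + b‖ ≤ ‖a‖ + ‖b‖ := norm_add_le a b
  have h2 : ‖a+b‖^2 ≤ (‖a‖+‖b‖)^2 := by
    apply pow_le_pow_left₀ (norm_nonneg _) h1
  have key : 2*‖a‖*‖b‖ ≤ α * ‖a‖^2 + α⁻¹*‖b‖^2 := by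
    rw [← sub_nonneg]
    have h3 : α * ‖a‖ ^ 2 + α⁻¹ * ‖b‖ ^ 2 - 2 * ‖a‖ * ‖b‖ = (α*‖a‖ - ‖b‖)^2 / α := by
      field_simp; ring
    rw [h3]; positivity
  nlinarith [norm_nonneg a, norm_nonneg b]

theorem MT_sq_add_le {E : Type*} [NormedAddCommGroup E] (a b : E) :
    ‖a + b‖^2 ≤ 2*‖a‖^2 + 2*‖b‖^2 := by
  have := MT_young_ineq a b (α := 1) one_pos
  norm_num at this
  linarith

theorem MT_sq_add3_le {E : Type*} [NormedAddCommGroup E] (a b c : E) :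
    ‖a + b + c‖^2 ≤ 3*‖a‖^2 + 3*‖b‖^2 + 3*‖c‖^2 := by
  have h1 : ‖a + b + c‖ ≤ ‖a‖ + ‖b‖ + ‖c‖ := norm_add₃_le
  have h2 : ‖a+b+c‖^2 ≤ (‖a‖+‖b‖+‖c‖)^2 := pow_le_pow_left₀ (norm_nonneg _) h1 2
  nlinarith [sq_nonneg (‖a‖-‖b‖), sq_nonneg (‖a‖-‖c‖), sq_nonneg (‖b‖-‖c‖)]

theorem MT_sum_norm_sub_mean_sq_le {E : Type*} [NormedAddCommGroup E] [InnerProductSpace ℝ E]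
    {n : ℕ} (hn : 0 < n) (v : Fin n → E) :
    ∑ i, ‖v i - (n:ℝ)⁻¹ • ∑ j, v j‖^2 ≤ ∑ i, ‖v i‖^2 := by
  have hne : (n:ℝ) ≠ 0 := Nat.cast_ne_zero.mpr hn.ne'
  set m := (n:ℝ)⁻¹ • ∑ j, v j with hm
  have hsum : ∑ j, v j = (n:ℝ) • m := (smul_inv_smul₀ hne _).symm
  have expand : ∀ i : Fin n, ‖v i - m‖^2 = ‖v i‖^2 - 2 * inner ℝ (v i) m + ‖m‖^2 :=
    fun i => norm_sub_sq_real _ _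
  have hinner : ∑ i, (2 * inner ℝ (v i) m : ℝ) = 2 * ((n:ℝ) * ‖m‖^2) := by
    rw [← Finset.mul_sum, ← sum_inner, hsum, real_inner_smul_left,
      real_inner_self_eq_norm_sq]
  have h1 : ∑ i, ‖v i - m‖^2
      = ∑ i, ‖v i‖^2 - 2 * ((n:ℝ) * ‖m‖^2) + (n:ℝ) * ‖m‖^2 := by
    rw [Finset.sum_congr rfl (fun i _ => expand i), Finset.sum_add_distrib,
      Finset.sum_sub_distrib, hinner, Finset.sum_const, Finset.card_univ,
      Fintype.card_fin, nsmul_eq_mul]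
  rw [h1]
  have hn' : (0:ℝ) < n := by exact_mod_cast hn
  nlinarith [sq_nonneg ‖m‖]

theorem MT_sq_sum_le {n : ℕ} (t : Fin n → ℝ) : (∑ i, t i)^2 ≤ (n:ℝ) * ∑ i, (t i)^2 := by
  have := sq_sum_le_card_mul_sum_sq (s := (Finset.univ : Finset (Fin n))) (f := t)
  simpa using this

-- integrability helpers

theorem MT_int_mul {Ω : Type} [mΩ : MeasurableSpace Ω] {μ : Measure Ω} [IsProbabilityMeasure μ]
    {f g : Ω → ℝ} (hf : MemLp f 2 μ) (hg : MemLp g 2 μ) :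
    Integrable (fun ω => f ω * g ω) μ := by
  refine Integrable.mono' ((hf.integrable_sq).add (hg.integrable_sq)) (hf.1.mul hg.1) ?_
  filter_upwards with ω
  simp only [Pi.add_apply]
  have h1 : ‖f ω * g ω‖ = |f ω| * |g ω| := by rw [Real.norm_eq_abs, abs_mul]
  nlinarith [sq_nonneg (|f ω| - |g ω|), sq_abs (f ω), sq_abs (g ω), abs_nonneg (f ω),
    abs_nonneg (g ω)]

theorem MT_int_normsq {Ω : Type} [mΩ : MeasurableSpace Ω] {μ : Measure Ω}
    [IsProbabilityMeasure μ] {E : Type*} [NormedAddCommGroup E]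
    {f : Ω → E} (hf : MemLp f 2 μ) :
    Integrable (fun ω => ‖f ω‖^2) μ :=
  hf.norm.integrable_sq

theorem MT_int_inner {Ω : Type} [mΩ : MeasurableSpace Ω] {μ : Measure Ω}
    [IsProbabilityMeasure μ] {E : Type*} [NormedAddCommGroup E] [InnerProductSpace ℝ E]
    {f g : Ω → E} (hf : MemLp f 2 μ) (hg : MemLp g 2 μ) :
    Integrable (fun ω => (inner ℝ (f ω) (g ω) : ℝ)) μ := by
  refine Integrable.mono' ((MT_int_normsq hf).add (MT_int_normsq hg))
    (hf.1.inner hg.1) ?_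
  filter_upwards with ω
  simp only [Pi.add_apply]
  have h1 : ‖(inner ℝ (f ω) (g ω) : ℝ)‖ ≤ ‖f ω‖ * ‖g ω‖ := norm_inner_le_norm _ _
  nlinarith [sq_nonneg (‖f ω‖ - ‖g ω‖), norm_nonneg (f ω), norm_nonneg (g ω)]

end TrackingAux
section TrackingAux2

theorem MT_coord_condexp_zero {Ω : Type} [mΩ : MeasurableSpace Ω] {μ : Measure Ω}
    [IsProbabilityMeasure μ] (F : Filtration ℕ mΩ) (r : ℕ) {d : ℕ}
    {Z : Ω → EuclideanSpace ℝ (Fin d)}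
    (hZ : Integrable Z μ) (hcond : μ[Z|F r] =ᵐ[μ] 0) (k : Fin d) :
    μ[fun ω => Z ω k|F r] =ᵐ[μ] 0 := by
  have hm : F r ≤ mΩ := F.le r
  haveI : IsFiniteMeasure (μ.trim hm) := isFiniteMeasure_trim hm
  have hZk : Integrable (fun ω => Z ω k) μ := by
    have := (EuclideanSpace.proj k : EuclideanSpace ℝ (Fin d) →L[ℝ] ℝ).integrable_comp hZ
    simpa using this
  refine (ae_eq_condExp_of_forall_setIntegral_eq hm hZk
    (fun s _ _ => (integrable_zero _ _ _).integrableOn)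
    (fun s hs hμs => ?_) ?_).symm
  · have h1 : ∫ ω in s, Z ω ∂μ = 0 := by
      rw [← setIntegral_condExp hm hZ hs]
      have : ∫ ω in s, (μ[Z|F r]) ω ∂μ = ∫ ω in s, (0 : EuclideanSpace ℝ (Fin d)) ∂μ :=
        setIntegral_congr_ae (hm s hs) (hcond.mono fun ω hω _ => hω)
      rw [this]; simp
    have h2 : ∫ ω in s, Z ω k ∂μ = (∫ ω in s, Z ω ∂μ) k := by
      have h3 := (EuclideanSpace.proj k : EuclideanSpace ℝ (Fin d) →L[ℝ] ℝ).integral_comp_comm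
        (hZ.restrict (s := s))
      simpa using h3
    rw [h2, h1]; simp
  · exact StronglyMeasurable.aestronglyMeasurable (@stronglyMeasurable_zero _ _ (F r) _ _)

theorem MT_integral_inner_eq_zero {Ω : Type} [mΩ : MeasurableSpace Ω] {μ : Measure Ω}
    [IsProbabilityMeasure μ] (F : Filtration ℕ mΩ) (r : ℕ) {d : ℕ}
    {Y Z : Ω → EuclideanSpace ℝ (Fin d)}
    (hYm : StronglyMeasurable[F r] Y) (hY : MemLp Y 2 μ) (hZ : MemLp Z 2 μ)
    (hcond : μ[Z|F r] =ᵐ[μ] 0) :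
    ∫ ω, (inner ℝ (Y ω) (Z ω) : ℝ) ∂μ = 0 := by
  have hm : F r ≤ mΩ := F.le r
  haveI : IsFiniteMeasure (μ.trim hm) := isFiniteMeasure_trim hm
  have hYk : ∀ k : Fin d, MemLp (fun ω => Y ω k) 2 μ := fun k => by
    have := ((EuclideanSpace.proj k : EuclideanSpace ℝ (Fin d) →L[ℝ] ℝ)).comp_memLp' hY
    exact this
  have hZk : ∀ k : Fin d, MemLp (fun ω => Z ω k) 2 μ := fun k => by
    have := ((EuclideanSpace.proj k : EuclideanSpace ℝ (Fin d) →L[ℝ] ℝ)).comp_memLp' hZ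
    exact this
  have hint : ∀ k : Fin d, ∫ ω, Y ω k * Z ω k ∂μ = 0 := by
    intro k
    set Yk : Ω → ℝ := fun ω => Y ω k with hYkdef
    set Zk : Ω → ℝ := fun ω => Z ω k with hZkdef
    have hYkm : StronglyMeasurable[F r] Yk :=
      ((EuclideanSpace.proj k : EuclideanSpace ℝ (Fin d) →L[ℝ] ℝ)).continuous.comp_stronglyMeasurable hYm
    have hmul : Integrable (fun ω => Yk ω * Zk ω) μ := MT_int_mul (hYk k) (hZk k)
    have hmul' : Integrable (Yk * Zk) μ := hmul
    have hpull : μ[Yk * Zk|F r]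
        =ᵐ[μ] Yk * μ[Zk|F r] :=
      condExp_mul_of_stronglyMeasurable_left hYkm hmul' ((hZk k).integrable (by norm_num))
    have hzero := MT_coord_condexp_zero F r (hZ.integrable (by norm_num)) hcond k
    have hfin : μ[Yk * Zk|F r] =ᵐ[μ] 0 := by
      refine hpull.trans ?_
      filter_upwards [hzero] with ω hω
      show Yk ω * (μ[Zk|F r]) ω = (0 : Ω → ℝ) ω
      have hω' : (μ[Zk|F r]) ω = 0 := hω
      rw [hω']
      simp
    have h4 := integral_condExp hm (f := Yk * Zk) (μ := μ)
    rw [integral_congr_ae hfin] at h4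
    simp only [Pi.zero_apply, integral_zero] at h4
    have h5 : ∫ ω, Y ω k * Z ω k ∂μ = ∫ ω, (Yk * Zk) ω ∂μ := rfl
    rw [h5, ← h4]
  have hip : ∀ ω, (inner ℝ (Y ω) (Z ω) : ℝ) = ∑ k, Y ω k * Z ω k := by
    intro ω
    simp [PiLp.inner_apply, RCLike.inner_apply, mul_comm]
  calc ∫ ω, (inner ℝ (Y ω) (Z ω) : ℝ) ∂μ = ∫ ω, ∑ k, Y ω k * Z ω k ∂μ :=
        integral_congr_ae (Filter.Eventually.of_forall hip)
    _ = ∑ k, ∫ ω, Y ω k * Z ω k ∂μ :=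
        integral_finset_sum _ (fun k _ => MT_int_mul (hYk k) (hZk k))
    _ = 0 := by simp [hint]

end TrackingAux2
namespace MTRun

section TrackingAux3

variable {N d : ℕ} {Ω : Type} [mΩ : MeasurableSpace Ω] {P : MTProblem N d Ω} (S : MTRun P)

theorem MT_hNne (P : MTProblem N d Ω) : (N:ℝ) ≠ 0 := Nat.cast_ne_zero.mpr P.hN.ne'

theorem MT_sum_gradF (P : MTProblem N d Ω) (v : EuclideanSpace ℝ (Fin d)) :
    ∑ _i : Fin N, P.gradF v = ∑ i, P.g i v := by
  rw [Finset.sum_const, Finset.card_univ, Fintype.card_fin, MTProblem.gradF,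
    ← Nat.cast_smul_eq_nsmul ℝ, smul_inv_smul₀ (MT_hNne P)]

theorem MT_eseq_const : ∀ r (i j : Fin N) (ω : Ω), S.eseq r i ω = S.eseq r j ω := by
  intro r
  induction r with
  | zero => intro i j ω; simp [MTRun.eseq]
  | succ r ih => intro i j ω; simp [MTRun.eseq, ih i j ω]

theorem MT_sum_smul_eseq (r : ℕ) (i : Fin N) (ω : Ω) :
    ∑ j, P.W i j • S.eseq r j ω = S.eseq r i ω := by
  calc ∑ j, P.W i j • S.eseq r j ω = ∑ j, P.W i j • S.eseq r i ω :=
        Finset.sum_congr rfl fun j _ => by rw [MT_eseq_const S r j i ω]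
    _ = (∑ j, P.W i j) • S.eseq r i ω := (Finset.sum_smul).symm
    _ = S.eseq r i ω := by rw [P.hWrow i, one_smul]

theorem MT_sum_dseq_eq_sum_eseq : ∀ (r : ℕ) (ω : Ω),
    ∑ i, S.dseq r i ω = ∑ i, S.eseq r i ω := by
  intro r
  induction r with
  | zero =>
    intro ω
    have h0 : ∑ i, (P.g i (S.xbar 0 ω) - P.gradF (S.xbar 0 ω)) = 0 := by
      rw [Finset.sum_sub_distrib, MT_sum_gradF P, sub_self]
    simp [MTRun.dseq, MTRun.eseq, ← Finset.smul_sum, h0]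
  | succ r ih =>
    intro ω
    simp only [MTRun.dseq, MTRun.eseq, Finset.sum_add_distrib, ← Finset.smul_sum, ih ω,
      MT_sum_gradF P]

theorem MT_sum_u0 (ω : Ω) : ∑ i, S.u 0 i ω = 0 := by
  simp only [S.hu0]
  rw [← Finset.smul_sum, Finset.sum_sub_distrib, Finset.sum_const, Finset.card_univ,
    Fintype.card_fin, ← Nat.cast_smul_eq_nsmul ℝ, smul_inv_smul₀ (MT_hNne P), sub_self,
    smul_zero]

theorem MT_sum_c : ∀ (r : ℕ) (ω : Ω), ∑ i, S.c r i ω = 0 := by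
  intro r
  induction r with
  | zero => intro ω; simp only [S.hc0]; exact MT_sum_u0 S ω
  | succ r ih =>
    intro ω
    simp only [S.hc]
    rw [Finset.sum_add_distrib]
    have hswap : ∑ i, ∑ j, P.W i j • (S.c r j ω - S.u (r+1) j ω)
        = ∑ j, (S.c r j ω - S.u (r+1) j ω) := by
      rw [Finset.sum_comm]
      refine Finset.sum_congr rfl fun j _ => ?_
      rw [← Finset.sum_smul, P.hWcol j, one_smul]
    rw [hswap, Finset.sum_sub_distrib, ih ω]
    abel

theorem MT_ubar_zero (ω : Ω) : S.ubar 0 ω = 0 := by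
  rw [MTRun.ubar, MT_sum_u0 S ω, smul_zero]

theorem MT_xbar_succ (r : ℕ) (ω : Ω) :
    S.xbar (r+1) ω = S.xbar r ω - S.η • S.ubar (r+1) ω := by
  simp only [MTRun.xbar, MTRun.ubar, S.hx]
  rw [Finset.sum_sub_distrib]
  have hswap : ∑ i, ∑ j, P.W i j • S.x r j ω = ∑ j, S.x r j ω := by
    rw [Finset.sum_comm]
    refine Finset.sum_congr rfl fun j _ => ?_
    rw [← Finset.sum_smul, P.hWcol j, one_smul]
  have hsum2 : ∑ i, S.η • (S.u (r+1) i ω - S.c r i ω) = S.η • ∑ i, S.u (r+1) i ω := by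
    rw [← Finset.smul_sum, Finset.sum_sub_distrib, MT_sum_c S r ω, sub_zero]
  rw [hswap, hsum2, smul_sub, smul_comm]

theorem MT_ubar_succ (r : ℕ) (ω : Ω) :
    S.ubar (r+1) ω = P.β • S.ubar r ω + (N:ℝ)⁻¹ • ∑ i, S.G r i ω := by
  simp only [MTRun.ubar, S.hu]
  rw [Finset.sum_add_distrib, smul_add, ← Finset.smul_sum, smul_comm]

end TrackingAux3

end MTRun
namespace MTRun

section TrackingAux4

variable {N d : ℕ} {Ω : Type} [mΩ : MeasurableSpace Ω] {P : MTProblem N d Ω} (S : MTRun P)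

theorem MT_cont_g (P : MTProblem N d Ω) (i : Fin N) : Continuous (P.g i) := by
  have h : LipschitzWith (Real.toNNReal P.L) (P.g i) := by
    refine LipschitzWith.of_dist_le_mul fun v w => ?_
    rw [dist_eq_norm, dist_eq_norm, Real.coe_toNNReal _ P.hL.le]
    exact P.hsmooth i v w
  exact h.continuous

theorem MT_gradF_lip (P : MTProblem N d Ω) (v w : EuclideanSpace ℝ (Fin d)) :
    ‖P.gradF v - P.gradF w‖ ≤ P.L * ‖v - w‖ := by
  have h1 : P.gradF v - P.gradF w = (N:ℝ)⁻¹ • ∑ i, (P.g i v - P.g i w) := by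
    rw [MTProblem.gradF, MTProblem.gradF, ← smul_sub, Finset.sum_sub_distrib]
  have h2 : ‖∑ i, (P.g i v - P.g i w)‖ ≤ (N:ℝ) * (P.L * ‖v - w‖) := by
    refine (norm_sum_le _ _).trans ?_
    calc ∑ i, ‖P.g i v - P.g i w‖ ≤ ∑ _i : Fin N, P.L * ‖v - w‖ :=
          Finset.sum_le_sum fun i _ => P.hsmooth i v w
      _ = (N:ℝ) * (P.L * ‖v - w‖) := by
          rw [Finset.sum_const, Finset.card_univ, Fintype.card_fin, nsmul_eq_mul]
  have hN0 : (0:ℝ) < N := by exact_mod_cast P.hN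
  rw [h1, norm_smul, Real.norm_eq_abs, abs_of_nonneg (inv_nonneg.mpr hN0.le)]
  calc (N:ℝ)⁻¹ * ‖∑ i, (P.g i v - P.g i w)‖ ≤ (N:ℝ)⁻¹ * ((N:ℝ) * (P.L * ‖v - w‖)) := by
        exact mul_le_mul_of_nonneg_left h2 (inv_nonneg.mpr hN0.le)
    _ = P.L * ‖v - w‖ := by field_simp

theorem MT_cont_gradF (P : MTProblem N d Ω) : Continuous P.gradF := by
  have h : LipschitzWith (Real.toNNReal P.L) P.gradF := by
    refine LipschitzWith.of_dist_le_mul fun v w => ?_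
    rw [dist_eq_norm, dist_eq_norm, Real.coe_toNNReal _ P.hL.le]
    exact MT_gradF_lip P v w
  exact h.continuous

theorem MT_memℒp_comp {μ : Measure Ω} [IsProbabilityMeasure μ]
    {g : EuclideanSpace ℝ (Fin d) → EuclideanSpace ℝ (Fin d)} {L : ℝ} (hL : 0 ≤ L)
    (hcont : Continuous g) (hlip : ∀ v w, ‖g v - g w‖ ≤ L * ‖v - w‖)
    {f : Ω → EuclideanSpace ℝ (Fin d)} (hf : MemLp f 2 μ) :
    MemLp (fun ω => g (f ω)) 2 μ := by
  have hdom : MemLp (fun ω => ‖g 0‖ + L * ‖f ω‖) 2 μ :=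
    (memLp_const (‖g 0‖)).add (hf.norm.const_mul L)
  refine hdom.of_le (hcont.comp_aestronglyMeasurable hf.1) ?_
  filter_upwards with ω
  have h0 : ‖g (f ω) - g 0‖ ≤ L * ‖f ω‖ := by
    have := hlip (f ω) 0
    rwa [sub_zero] at this
  have h1 : ‖g (f ω)‖ ≤ ‖g 0‖ + L * ‖f ω‖ := by
    calc ‖g (f ω)‖ = ‖g 0 + (g (f ω) - g 0)‖ := by
          congr 1
          abel
      _ ≤ ‖g 0‖ + ‖g (f ω) - g 0‖ := norm_add_le _ _
      _ ≤ ‖g 0‖ + L * ‖f ω‖ := by linarith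
  have h2 : (0:ℝ) ≤ ‖g 0‖ + L * ‖f ω‖ := by positivity
  calc ‖g (f ω)‖ ≤ ‖g 0‖ + L * ‖f ω‖ := h1
    _ = ‖‖g 0‖ + L * ‖f ω‖‖ := (Real.norm_of_nonneg h2).symm

theorem MT_memℒp_xuc : ∀ r : ℕ,
    (∀ i, MemLp (S.x r i) 2 P.μ) ∧ (∀ i, MemLp (S.u r i) 2 P.μ) ∧
      (∀ i, MemLp (S.c r i) 2 P.μ) := by
  haveI := P.prob
  intro r
  induction r with
  | zero =>
    have hu : ∀ i, MemLp (S.u 0 i) 2 P.μ := by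
      intro i
      have heq : S.u 0 i = fun ω => (1 - P.β)⁻¹ • (S.G 0 i ω - (N:ℝ)⁻¹ • ∑ j, S.G 0 j ω) :=
        funext (S.hu0 i)
      rw [heq]
      exact (((S.hmeas 0 i).sub
        ((memLp_finset_sum Finset.univ (fun j _ => S.hmeas 0 j)).const_smul (_ : ℝ))).const_smul (_ : ℝ))
    refine ⟨fun i => ?_, hu, fun i => ?_⟩
    · rw [S.hx0 i]; exact memLp_const _
    · rw [S.hc0 i]; exact hu i
  | succ r ih =>
    obtain ⟨hx, hu, hc⟩ := ih
    have hu1 : ∀ i, MemLp (S.u (r+1) i) 2 P.μ := by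
      intro i
      have heq : S.u (r+1) i = fun ω => P.β • S.u r i ω + S.G r i ω :=
        funext (S.hu r i)
      rw [heq]
      exact ((hu i).const_smul (_ : ℝ)).add (S.hmeas r i)
    refine ⟨fun i => ?_, hu1, fun i => ?_⟩
    · have heq : S.x (r+1) i
          = fun ω => (∑ j, P.W i j • S.x r j ω) - S.η • (S.u (r+1) i ω - S.c r i ω) :=
        funext (S.hx r i)
      rw [heq]
      exact (memLp_finset_sum Finset.univ (fun j _ => (hx j).const_smul (_ : ℝ))).sub
        (((hu1 i).sub (hc i)).const_smul (_ : ℝ))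
    · have heq : S.c (r+1) i
          = fun ω => (∑ j, P.W i j • (S.c r j ω - S.u (r+1) j ω)) + S.u (r+1) i ω :=
        funext (S.hc r i)
      rw [heq]
      exact (memLp_finset_sum Finset.univ
        (fun j _ => ((hc j).sub (hu1 j)).const_smul (_ : ℝ))).add (hu1 i)

theorem MT_memℒp_xbar (r : ℕ) : MemLp (S.xbar r) 2 P.μ := by
  haveI := P.prob
  exact (memLp_finset_sum Finset.univ (fun i _ => (MT_memℒp_xuc S r).1 i)).const_smul (_ : ℝ)

theorem MT_memℒp_ubar (r : ℕ) : MemLp (S.ubar r) 2 P.μ := by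
  haveI := P.prob
  exact (memLp_finset_sum Finset.univ (fun i _ => (MT_memℒp_xuc S r).2.1 i)).const_smul (_ : ℝ)

theorem MT_memℒp_g_xbar (r : ℕ) (i : Fin N) :
    MemLp (fun ω => P.g i (S.xbar r ω)) 2 P.μ := by
  haveI := P.prob
  exact MT_memℒp_comp P.hL.le (MT_cont_g P i) (P.hsmooth i) (MT_memℒp_xbar S r)

theorem MT_memℒp_g_x (r : ℕ) (i : Fin N) :
    MemLp (fun ω => P.g i (S.x r i ω)) 2 P.μ := by
  haveI := P.prob
  exact MT_memℒp_comp P.hL.le (MT_cont_g P i) (P.hsmooth i) ((MT_memℒp_xuc S r).1 i)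

theorem MT_memℒp_gradF_xbar (r : ℕ) :
    MemLp (fun ω => P.gradF (S.xbar r ω)) 2 P.μ := by
  haveI := P.prob
  exact MT_memℒp_comp P.hL.le (MT_cont_gradF P) (MT_gradF_lip P) (MT_memℒp_xbar S r)

theorem MT_memℒp_dseq : ∀ (r : ℕ) (i : Fin N), MemLp (S.dseq r i) 2 P.μ := by
  haveI := P.prob
  intro r
  induction r with
  | zero =>
    intro i
    have heq : S.dseq 0 i
        = fun ω => (1 - P.β)⁻¹ • (P.g i (S.xbar 0 ω) - P.gradF (S.xbar 0 ω)) := rfl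
    rw [heq]
    exact ((MT_memℒp_g_xbar S 0 i).sub (MT_memℒp_gradF_xbar S 0)).const_smul (_ : ℝ)
  | succ r ih =>
    intro i
    have heq : S.dseq (r+1) i = fun ω => P.β • S.dseq r i ω + P.g i (S.xbar r ω) := rfl
    rw [heq]
    exact ((ih i).const_smul (_ : ℝ)).add (MT_memℒp_g_xbar S r i)

theorem MT_memℒp_eseq : ∀ (r : ℕ) (i : Fin N), MemLp (S.eseq r i) 2 P.μ := by
  haveI := P.prob
  intro r
  induction r with
  | zero =>
    intro i
    have heq : S.eseq 0 i = fun _ => (0 : EuclideanSpace ℝ (Fin d)) := rfl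
    rw [heq]
    exact memLp_const _
  | succ r ih =>
    intro i
    have heq : S.eseq (r+1) i = fun ω => P.β • S.eseq r i ω + P.gradF (S.xbar r ω) := rfl
    rw [heq]
    exact ((ih i).const_smul (_ : ℝ)).add (MT_memℒp_gradF_xbar S r)

theorem MT_sm_xbar (r : ℕ) : StronglyMeasurable[S.ℱ r] (S.xbar r) := by
  have : StronglyMeasurable[S.ℱ r] (fun ω => ∑ i, S.x r i ω) :=
    Finset.stronglyMeasurable_fun_sum Finset.univ (fun i _ => S.hadapted_x r i)
  exact this.const_smul (_ : ℝ)

theorem MT_sm_u_succ : ∀ (r : ℕ) (i : Fin N), StronglyMeasurable[S.ℱ (r+1)] (S.u (r+1) i) := by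
  intro r
  induction r with
  | zero =>
    intro i
    have hu0 : ∀ j, StronglyMeasurable[S.ℱ 1] (S.u 0 j) := by
      intro j
      have heq : S.u 0 j = fun ω => (1 - P.β)⁻¹ • (S.G 0 j ω - (N:ℝ)⁻¹ • ∑ l, S.G 0 l ω) :=
        funext (S.hu0 j)
      rw [heq]
      exact (((S.hadapted_G 0 j).sub
        ((Finset.stronglyMeasurable_fun_sum Finset.univ
          (fun l _ => S.hadapted_G 0 l)).const_smul (_ : ℝ))).const_smul (_ : ℝ))
    have heq : S.u 1 i = fun ω => P.β • S.u 0 i ω + S.G 0 i ω := funext (S.hu 0 i)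
    rw [heq]
    exact ((hu0 i).const_smul (_ : ℝ)).add (S.hadapted_G 0 i)
  | succ r ih =>
    intro i
    have heq : S.u (r+2) i = fun ω => P.β • S.u (r+1) i ω + S.G (r+1) i ω :=
      funext (S.hu (r+1) i)
    rw [heq]
    exact (((ih i).mono (S.ℱ.mono (Nat.le_succ _))).const_smul (_ : ℝ)).add (S.hadapted_G (r+1) i)

theorem MT_sm_ubar : ∀ r : ℕ, StronglyMeasurable[S.ℱ r] (S.ubar r) := by
  intro r
  match r with
  | 0 =>
    have heq : S.ubar 0 = fun _ => (0 : EuclideanSpace ℝ (Fin d)) := funext (MT_ubar_zero S)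
    rw [heq]
    exact stronglyMeasurable_const
  | (r+1) =>
    exact (Finset.stronglyMeasurable_fun_sum Finset.univ
      (fun i _ => MT_sm_u_succ S r i)).const_smul (_ : ℝ)

end TrackingAux4

end MTRun
namespace MTRun

section TrackingAux5

variable {N d : ℕ} {Ω : Type} [mΩ : MeasurableSpace Ω] {P : MTProblem N d Ω} (S : MTRun P)

/-- Mixing inequality with row-index form. -/
theorem MT_mix' (P : MTProblem N d Ω) (v : Fin N → EuclideanSpace ℝ (Fin d)) :
    ∑ i, ‖(∑ j, P.W i j • v j) - (N:ℝ)⁻¹ • ∑ j, v j‖^2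
      ≤ (1 - P.p) * ∑ i, ‖v i - (N:ℝ)⁻¹ • ∑ j, v j‖^2 := by
  have h := P.hmix v
  have hsym : ∀ a : Fin N, (∑ b, P.W b a • v b) = ∑ b, P.W a b • v b :=
    fun a => Finset.sum_congr rfl fun b _ => by rw [P.hWsymm b a]
  calc ∑ i, ‖(∑ j, P.W i j • v j) - (N:ℝ)⁻¹ • ∑ j, v j‖^2
      = ∑ i, ‖(∑ j, P.W j i • v j) - (N:ℝ)⁻¹ • ∑ j, v j‖^2 :=
        Finset.sum_congr rfl fun i _ => by rw [hsym i]
    _ ≤ (1 - P.p) * ∑ i, ‖v i - (N:ℝ)⁻¹ • ∑ j, v j‖^2 := h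

/-- `‖v(I-W)‖² ≤ 4 ‖v‖²`. -/
theorem MT_IW_bound (P : MTProblem N d Ω) (v : Fin N → EuclideanSpace ℝ (Fin d)) :
    ∑ i, ‖v i - ∑ j, P.W i j • v j‖^2 ≤ 4 * ∑ i, ‖v i‖^2 := by
  set m : EuclideanSpace ℝ (Fin d) := (N:ℝ)⁻¹ • ∑ j, v j with hm
  have h1 : ∀ i, ‖v i - ∑ j, P.W i j • v j‖^2
      ≤ 2*‖v i - m‖^2 + 2*‖(∑ j, P.W i j • v j) - m‖^2 := by
    intro i
    have h := MT_sq_add_le (v i - m) (m - ∑ j, P.W i j • v j)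
    rw [sub_add_sub_cancel] at h
    rw [norm_sub_rev (m) (∑ j, P.W i j • v j)] at h
    exact h
  have h2 : ∑ i, ‖v i - ∑ j, P.W i j • v j‖^2
      ≤ 2 * ∑ i, ‖v i - m‖^2 + 2 * ∑ i, ‖(∑ j, P.W i j • v j) - m‖^2 := by
    calc ∑ i, ‖v i - ∑ j, P.W i j • v j‖^2
        ≤ ∑ i, (2*‖v i - m‖^2 + 2*‖(∑ j, P.W i j • v j) - m‖^2) :=
          Finset.sum_le_sum fun i _ => h1 i
      _ = 2 * ∑ i, ‖v i - m‖^2 + 2 * ∑ i, ‖(∑ j, P.W i j • v j) - m‖^2 := by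
          rw [Finset.sum_add_distrib, ← Finset.mul_sum, ← Finset.mul_sum]
  have h3 := MT_mix' P v
  have h4 : ∑ i, ‖v i - m‖^2 ≤ ∑ i, ‖v i‖^2 := MT_sum_norm_sub_mean_sq_le P.hN v
  have h5 : (0:ℝ) ≤ ∑ i, ‖v i - m‖^2 := Finset.sum_nonneg fun i _ => sq_nonneg _
  have hp1 := P.hp1
  have hp0 := P.hp0
  nlinarith [h2, h3, h4, h5]

theorem MT_key_pointwise (r : ℕ) (ω : Ω) :
    ∑ i, ‖S.dseq (r+1+1) i ω - S.c (r+1) i ω - S.eseq (r+1+1) i ω‖^2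
      ≤ (1 - P.p/2) * ∑ i, ‖S.dseq (r+1) i ω - S.c r i ω - S.eseq (r+1) i ω‖^2
        + (18*P.β^2/P.p) *
            ∑ i, ‖S.dseq (r+1) i ω - S.dseq r i ω - S.eseq (r+1) i ω + S.eseq r i ω‖^2
        + (24/P.p) * ∑ i, ‖S.u (r+1) i ω - S.dseq (r+1) i ω‖^2
        + (36*(N:ℝ)*P.L^2/P.p) * ‖S.xbar (r+1) ω - S.xbar r ω‖^2 := by
  have hp0 := P.hp0
  have hp1 := P.hp1
  have hβ0 := P.hβ0
  set a := ∑ i, ‖S.dseq (r+1) i ω - S.c r i ω - S.eseq (r+1) i ω‖^2 with ha_def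
  set b := ∑ i, ‖S.dseq (r+1) i ω - S.dseq r i ω - S.eseq (r+1) i ω + S.eseq r i ω‖^2 with hb_def
  set cc := ∑ i, ‖S.u (r+1) i ω - S.dseq (r+1) i ω‖^2 with hc_def
  set X := ‖S.xbar (r+1) ω - S.xbar r ω‖^2 with hX_def
  clear_value a b cc X
  -- decomposition
  have hdecomp : ∀ i, S.dseq (r+1+1) i ω - S.c (r+1) i ω - S.eseq (r+1+1) i ω
      = (∑ j, P.W i j • (S.dseq (r+1) j ω - S.c r j ω - S.eseq (r+1) j ω))
        + (((S.dseq (r+1+1) i ω - S.eseq (r+1+1) i ω)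
              - (S.dseq (r+1) i ω - S.eseq (r+1) i ω))
           + -((S.u (r+1) i ω - S.dseq (r+1) i ω)
              - ∑ j, P.W i j • (S.u (r+1) j ω - S.dseq (r+1) j ω))) := by
    intro i
    have e1 : ∑ j, P.W i j • (S.dseq (r+1) j ω - S.c r j ω - S.eseq (r+1) j ω)
        = (∑ j, P.W i j • S.dseq (r+1) j ω) - (∑ j, P.W i j • S.c r j ω)
            - S.eseq (r+1) i ω := by
      rw [← MT_sum_smul_eseq S (r+1) i ω]
      rw [← Finset.sum_sub_distrib, ← Finset.sum_sub_distrib]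
      exact Finset.sum_congr rfl fun j _ => by rw [smul_sub, smul_sub]
    have e3 : ∑ j, P.W i j • (S.u (r+1) j ω - S.dseq (r+1) j ω)
        = (∑ j, P.W i j • S.u (r+1) j ω) - ∑ j, P.W i j • S.dseq (r+1) j ω := by
      rw [← Finset.sum_sub_distrib]
      exact Finset.sum_congr rfl fun j _ => by rw [smul_sub]
    have e4 : S.c (r+1) i ω
        = ((∑ j, P.W i j • S.c r j ω) - ∑ j, P.W i j • S.u (r+1) j ω)
          + S.u (r+1) i ω := by
      rw [S.hc r i ω]
      congr 1
      rw [← Finset.sum_sub_distrib]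
      exact Finset.sum_congr rfl fun j _ => by rw [smul_sub]
    rw [e1, e3, e4]
    abel
  -- Δ identity
  have hΔeq : ∀ i, (S.dseq (r+1+1) i ω - S.eseq (r+1+1) i ω)
        - (S.dseq (r+1) i ω - S.eseq (r+1) i ω)
      = P.β • (S.dseq (r+1) i ω - S.dseq r i ω - S.eseq (r+1) i ω + S.eseq r i ω)
        + (P.g i (S.xbar (r+1) ω) - P.g i (S.xbar r ω))
        + -(P.gradF (S.xbar (r+1) ω) - P.gradF (S.xbar r ω)) := by
    intro i
    have hd2 : S.dseq (r+1+1) i ω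
        = P.β • S.dseq (r+1) i ω + P.g i (S.xbar (r+1) ω) := by simp only [MTRun.dseq]
    have he2 : S.eseq (r+1+1) i ω
        = P.β • S.eseq (r+1) i ω + P.gradF (S.xbar (r+1) ω) := by simp only [MTRun.eseq]
    have hd1 : S.dseq (r+1) i ω = P.β • S.dseq r i ω + P.g i (S.xbar r ω) := by
      simp only [MTRun.dseq]
    have he1 : S.eseq (r+1) i ω = P.β • S.eseq r i ω + P.gradF (S.xbar r ω) := by
      simp only [MTRun.eseq]
    rw [hd2, he2, hd1, he1]
    module
  -- Δ bound
  have hΔbound : ∑ i, ‖(S.dseq (r+1+1) i ω - S.eseq (r+1+1) i ω)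
        - (S.dseq (r+1) i ω - S.eseq (r+1) i ω)‖^2
      ≤ 3*P.β^2 * b + (N:ℝ) * (6*P.L^2*X) := by
    have hper : ∀ i, ‖(S.dseq (r+1+1) i ω - S.eseq (r+1+1) i ω)
          - (S.dseq (r+1) i ω - S.eseq (r+1) i ω)‖^2
        ≤ 3*P.β^2*‖S.dseq (r+1) i ω - S.dseq r i ω - S.eseq (r+1) i ω + S.eseq r i ω‖^2
          + 6*P.L^2*X := by
      intro i
      rw [hΔeq i]
      have h3 := MT_sq_add3_le
        (P.β • (S.dseq (r+1) i ω - S.dseq r i ω - S.eseq (r+1) i ω + S.eseq r i ω))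
        (P.g i (S.xbar (r+1) ω) - P.g i (S.xbar r ω))
        (-(P.gradF (S.xbar (r+1) ω) - P.gradF (S.xbar r ω)))
      have hb1 : ‖P.β • (S.dseq (r+1) i ω - S.dseq r i ω - S.eseq (r+1) i ω + S.eseq r i ω)‖^2
          = P.β^2 * ‖S.dseq (r+1) i ω - S.dseq r i ω - S.eseq (r+1) i ω + S.eseq r i ω‖^2 := by
        rw [norm_smul, Real.norm_eq_abs, mul_pow, sq_abs]
      have hb2 : ‖P.g i (S.xbar (r+1) ω) - P.g i (S.xbar r ω)‖^2 ≤ P.L^2 * X := by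
        have := P.hsmooth i (S.xbar (r+1) ω) (S.xbar r ω)
        have h4 : ‖P.g i (S.xbar (r+1) ω) - P.g i (S.xbar r ω)‖^2
            ≤ (P.L * ‖S.xbar (r+1) ω - S.xbar r ω‖)^2 :=
          pow_le_pow_left₀ (norm_nonneg _) this 2
        calc ‖P.g i (S.xbar (r+1) ω) - P.g i (S.xbar r ω)‖^2
            ≤ (P.L * ‖S.xbar (r+1) ω - S.xbar r ω‖)^2 := h4
          _ = P.L^2 * X := by rw [mul_pow, hX_def]
      have hb3 : ‖-(P.gradF (S.xbar (r+1) ω) - P.gradF (S.xbar r ω))‖^2 ≤ P.L^2 * X := by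
        rw [norm_neg]
        have := MT_gradF_lip P (S.xbar (r+1) ω) (S.xbar r ω)
        have h4 : ‖P.gradF (S.xbar (r+1) ω) - P.gradF (S.xbar r ω)‖^2
            ≤ (P.L * ‖S.xbar (r+1) ω - S.xbar r ω‖)^2 :=
          pow_le_pow_left₀ (norm_nonneg _) this 2
        calc ‖P.gradF (S.xbar (r+1) ω) - P.gradF (S.xbar r ω)‖^2
            ≤ (P.L * ‖S.xbar (r+1) ω - S.xbar r ω‖)^2 := h4
          _ = P.L^2 * X := by rw [mul_pow, hX_def]
      linarith only [h3, hb2, hb3, hb1.le, hb1.ge]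
    calc ∑ i, ‖(S.dseq (r+1+1) i ω - S.eseq (r+1+1) i ω)
          - (S.dseq (r+1) i ω - S.eseq (r+1) i ω)‖^2
        ≤ ∑ i, (3*P.β^2*‖S.dseq (r+1) i ω - S.dseq r i ω - S.eseq (r+1) i ω + S.eseq r i ω‖^2
            + 6*P.L^2*X) := Finset.sum_le_sum fun i _ => hper i
      _ = 3*P.β^2 * b + (N:ℝ) * (6*P.L^2*X) := by
          rw [Finset.sum_add_distrib, ← Finset.mul_sum, Finset.sum_const, Finset.card_univ,
            Fintype.card_fin, nsmul_eq_mul, hb_def]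
  -- (I-W) bound on s
  have hs4 : ∑ i, ‖(S.u (r+1) i ω - S.dseq (r+1) i ω)
        - ∑ j, P.W i j • (S.u (r+1) j ω - S.dseq (r+1) j ω)‖^2 ≤ 4 * cc := by
    rw [hc_def]
    exact MT_IW_bound P (fun i => S.u (r+1) i ω - S.dseq (r+1) i ω)
  -- contraction on A
  have hAsum : ∑ i, (S.dseq (r+1) i ω - S.c r i ω - S.eseq (r+1) i ω) = 0 := by
    rw [Finset.sum_sub_distrib, Finset.sum_sub_distrib, MT_sum_dseq_eq_sum_eseq S (r+1) ω,
      MT_sum_c S r ω]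
    abel
  have hWA : ∑ i, ‖∑ j, P.W i j • (S.dseq (r+1) j ω - S.c r j ω - S.eseq (r+1) j ω)‖^2
      ≤ (1 - P.p) * a := by
    have h := MT_mix' P (fun i => S.dseq (r+1) i ω - S.c r i ω - S.eseq (r+1) i ω)
    rw [hAsum] at h
    rw [ha_def]
    simpa using h
  -- Young assembly
  have hYoung : ∑ i, ‖S.dseq (r+1+1) i ω - S.c (r+1) i ω - S.eseq (r+1+1) i ω‖^2
      ≤ (1 + P.p/2) *
          ∑ i, ‖∑ j, P.W i j • (S.dseq (r+1) j ω - S.c r j ω - S.eseq (r+1) j ω)‖^2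
        + (1 + (P.p/2)⁻¹) *
          ∑ i, ‖((S.dseq (r+1+1) i ω - S.eseq (r+1+1) i ω)
                - (S.dseq (r+1) i ω - S.eseq (r+1) i ω))
             + -((S.u (r+1) i ω - S.dseq (r+1) i ω)
                - ∑ j, P.W i j • (S.u (r+1) j ω - S.dseq (r+1) j ω))‖^2 := by
    calc ∑ i, ‖S.dseq (r+1+1) i ω - S.c (r+1) i ω - S.eseq (r+1+1) i ω‖^2
        = ∑ i, ‖(∑ j, P.W i j • (S.dseq (r+1) j ω - S.c r j ω - S.eseq (r+1) j ω))
            + (((S.dseq (r+1+1) i ω - S.eseq (r+1+1) i ω)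
                  - (S.dseq (r+1) i ω - S.eseq (r+1) i ω))
               + -((S.u (r+1) i ω - S.dseq (r+1) i ω)
                  - ∑ j, P.W i j • (S.u (r+1) j ω - S.dseq (r+1) j ω)))‖^2 :=
          Finset.sum_congr rfl fun i _ => by rw [← hdecomp i]
      _ ≤ ∑ i, ((1 + P.p/2) *
            ‖∑ j, P.W i j • (S.dseq (r+1) j ω - S.c r j ω - S.eseq (r+1) j ω)‖^2
          + (1 + (P.p/2)⁻¹) *
            ‖((S.dseq (r+1+1) i ω - S.eseq (r+1+1) i ω)
                - (S.dseq (r+1) i ω - S.eseq (r+1) i ω))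
             + -((S.u (r+1) i ω - S.dseq (r+1) i ω)
                - ∑ j, P.W i j • (S.u (r+1) j ω - S.dseq (r+1) j ω))‖^2) :=
          Finset.sum_le_sum fun i _ => MT_young_ineq _ _ (by positivity)
      _ = _ := by rw [Finset.sum_add_distrib, ← Finset.mul_sum, ← Finset.mul_sum]
  -- B bound
  have hBsum : ∑ i, ‖((S.dseq (r+1+1) i ω - S.eseq (r+1+1) i ω)
            - (S.dseq (r+1) i ω - S.eseq (r+1) i ω))
         + -((S.u (r+1) i ω - S.dseq (r+1) i ω)
            - ∑ j, P.W i j • (S.u (r+1) j ω - S.dseq (r+1) j ω))‖^2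
      ≤ 6*P.β^2*b + (N:ℝ)*(12*P.L^2*X) + 8*cc := by
    have hper : ∀ i : Fin N, ‖((S.dseq (r+1+1) i ω - S.eseq (r+1+1) i ω)
            - (S.dseq (r+1) i ω - S.eseq (r+1) i ω))
         + -((S.u (r+1) i ω - S.dseq (r+1) i ω)
            - ∑ j, P.W i j • (S.u (r+1) j ω - S.dseq (r+1) j ω))‖^2
        ≤ 2*‖(S.dseq (r+1+1) i ω - S.eseq (r+1+1) i ω)
            - (S.dseq (r+1) i ω - S.eseq (r+1) i ω)‖^2
          + 2*‖(S.u (r+1) i ω - S.dseq (r+1) i ω)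
            - ∑ j, P.W i j • (S.u (r+1) j ω - S.dseq (r+1) j ω)‖^2 := by
      intro i
      have := MT_sq_add_le ((S.dseq (r+1+1) i ω - S.eseq (r+1+1) i ω)
            - (S.dseq (r+1) i ω - S.eseq (r+1) i ω))
        (-((S.u (r+1) i ω - S.dseq (r+1) i ω)
            - ∑ j, P.W i j • (S.u (r+1) j ω - S.dseq (r+1) j ω)))
      rwa [norm_neg] at this
    calc ∑ i, ‖((S.dseq (r+1+1) i ω - S.eseq (r+1+1) i ω)
            - (S.dseq (r+1) i ω - S.eseq (r+1) i ω))
         + -((S.u (r+1) i ω - S.dseq (r+1) i ω)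
            - ∑ j, P.W i j • (S.u (r+1) j ω - S.dseq (r+1) j ω))‖^2
        ≤ ∑ i, (2*‖(S.dseq (r+1+1) i ω - S.eseq (r+1+1) i ω)
            - (S.dseq (r+1) i ω - S.eseq (r+1) i ω)‖^2
          + 2*‖(S.u (r+1) i ω - S.dseq (r+1) i ω)
            - ∑ j, P.W i j • (S.u (r+1) j ω - S.dseq (r+1) j ω)‖^2) :=
          Finset.sum_le_sum fun i _ => hper i
      _ = 2 * ∑ i, ‖(S.dseq (r+1+1) i ω - S.eseq (r+1+1) i ω)
            - (S.dseq (r+1) i ω - S.eseq (r+1) i ω)‖^2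
          + 2 * ∑ i, ‖(S.u (r+1) i ω - S.dseq (r+1) i ω)
            - ∑ j, P.W i j • (S.u (r+1) j ω - S.dseq (r+1) j ω)‖^2 := by
          rw [Finset.sum_add_distrib, ← Finset.mul_sum, ← Finset.mul_sum]
      _ ≤ 6*P.β^2*b + (N:ℝ)*(12*P.L^2*X) + 8*cc := by linarith only [hΔbound, hs4]
  -- final numeric assembly
  have ha0 : 0 ≤ a := by rw [ha_def]; exact Finset.sum_nonneg fun i _ => sq_nonneg _
  have hb0 : 0 ≤ b := by rw [hb_def]; exact Finset.sum_nonneg fun i _ => sq_nonneg _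
  have hcc0 : 0 ≤ cc := by rw [hc_def]; exact Finset.sum_nonneg fun i _ => sq_nonneg _
  have hX0 : 0 ≤ X := by rw [hX_def]; exact sq_nonneg _
  have hN1 : (1:ℝ) ≤ N := by exact_mod_cast P.hN
  have hBnn : (0:ℝ) ≤ ∑ i, ‖((S.dseq (r+1+1) i ω - S.eseq (r+1+1) i ω)
            - (S.dseq (r+1) i ω - S.eseq (r+1) i ω))
         + -((S.u (r+1) i ω - S.dseq (r+1) i ω)
            - ∑ j, P.W i j • (S.u (r+1) j ω - S.dseq (r+1) j ω))‖^2 :=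
    Finset.sum_nonneg fun i _ => sq_nonneg _
  have hinv : (P.p/2)⁻¹ = 2/P.p := by rw [inv_div]
  have h3p : 1 + 2/P.p ≤ 3/P.p := by
    have h : 3/P.p - (1 + 2/P.p) = (1-P.p)/P.p := by field_simp; ring
    have h2 : 0 ≤ (1-P.p)/P.p := div_nonneg (by linarith only [hp1]) hp0.le
    linarith only [h, h2]
  have hcoef : (1 + P.p/2)*((1-P.p)*a) ≤ (1 - P.p/2)*a := by
    have hid : (1 - P.p/2)*a - (1 + P.p/2)*((1-P.p)*a) = (P.p^2/2)*a := by ring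
    have hnn : 0 ≤ (P.p^2/2)*a := by positivity
    linarith only [hid, hnn]
  have hterm1 : (1 + P.p/2) *
      ∑ i, ‖∑ j, P.W i j • (S.dseq (r+1) j ω - S.c r j ω - S.eseq (r+1) j ω)‖^2
      ≤ (1 + P.p/2)*((1-P.p)*a) :=
    mul_le_mul_of_nonneg_left hWA (by linarith)
  have hterm2 : (1 + (P.p/2)⁻¹) *
      ∑ i, ‖((S.dseq (r+1+1) i ω - S.eseq (r+1+1) i ω)
            - (S.dseq (r+1) i ω - S.eseq (r+1) i ω))
         + -((S.u (r+1) i ω - S.dseq (r+1) i ω)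
            - ∑ j, P.W i j • (S.u (r+1) j ω - S.dseq (r+1) j ω))‖^2
      ≤ (3/P.p) * (6*P.β^2*b + (N:ℝ)*(12*P.L^2*X) + 8*cc) := by
    rw [hinv]
    refine mul_le_mul (by linarith) hBsum hBnn (by positivity)
  have hexp : (3/P.p) * (6*P.β^2*b + (N:ℝ)*(12*P.L^2*X) + 8*cc)
      = (18*P.β^2/P.p)*b + (24/P.p)*cc + (36*(N:ℝ)*P.L^2/P.p)*X := by
    field_simp
    ring
  refine le_trans (le_trans hYoung (add_le_add hterm1 hterm2)) ?_
  rw [hexp]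
  linarith only [hcoef]
end TrackingAux5

end MTRun
namespace MTRun

section TrackingAux6

variable {N d : ℕ} {Ω : Type} [mΩ : MeasurableSpace Ω] {P : MTProblem N d Ω} (S : MTRun P)

theorem MT_memℒp_noise (r : ℕ) (i : Fin N) :
    MemLp (fun ω => S.G r i ω - P.g i (S.x r i ω)) 2 P.μ := by
  haveI := P.prob
  exact (S.hmeas r i).sub (MT_memℒp_g_x S r i)

theorem MT_condexp_noise (r : ℕ) (i : Fin N) :
    P.μ[fun ω => S.G r i ω - P.g i (S.x r i ω)|S.ℱ r] =ᵐ[P.μ] 0 := by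
  haveI := P.prob
  have hm : S.ℱ r ≤ mΩ := S.ℱ.le r
  haveI : IsFiniteMeasure (P.μ.trim hm) := isFiniteMeasure_trim hm
  have hGint : Integrable (S.G r i) P.μ := (S.hmeas r i).integrable (by norm_num)
  have hgx : MemLp (fun ω => P.g i (S.x r i ω)) 2 P.μ := MT_memℒp_g_x S r i
  have hgint : Integrable (fun ω => P.g i (S.x r i ω)) P.μ := hgx.integrable (by norm_num)
  have h1 : P.μ[fun ω => S.G r i ω - P.g i (S.x r i ω)|S.ℱ r]
      =ᵐ[P.μ] P.μ[S.G r i|S.ℱ r] - P.μ[fun ω => P.g i (S.x r i ω)|S.ℱ r] :=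
    condExp_sub hGint hgint _
  have h2 : P.μ[fun ω => P.g i (S.x r i ω)|S.ℱ r] = fun ω => P.g i (S.x r i ω) :=
    condExp_of_stronglyMeasurable hm
      ((MT_cont_g P i).comp_stronglyMeasurable (S.hadapted_x r i)) hgint
  have h3 := S.hunbiased r i
  filter_upwards [h1, h3] with ω hω1 hω3
  rw [hω1]
  simp only [Pi.sub_apply]
  rw [congrFun h2 ω, hω3]
  simp

theorem MT_var_avg (r : ℕ) :
    ∫ ω, ‖(N:ℝ)⁻¹ • ∑ i, (S.G r i ω - P.g i (S.x r i ω))‖^2 ∂P.μ ≤ P.σ^2/N := by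
  haveI := P.prob
  have hNne : (N:ℝ) ≠ 0 := MT_hNne P
  have hN0 : (0:ℝ) < N := by
    have := P.hN
    exact_mod_cast this
  have hpt : ∀ ω, ‖(N:ℝ)⁻¹ • ∑ i, (S.G r i ω - P.g i (S.x r i ω))‖^2
      = ((N:ℝ)⁻¹)^2 * ∑ i, ∑ j,
          (inner ℝ (S.G r i ω - P.g i (S.x r i ω)) (S.G r j ω - P.g j (S.x r j ω)) : ℝ) := by
    intro ω
    rw [norm_smul, mul_pow, Real.norm_eq_abs, sq_abs, ← real_inner_self_eq_norm_sq, sum_inner]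
    congr 1
    exact Finset.sum_congr rfl fun i _ => inner_sum _ _ _
  rw [integral_congr_ae (Filter.Eventually.of_forall hpt), integral_const_mul]
  have hint : ∀ i j : Fin N, Integrable (fun ω =>
      (inner ℝ (S.G r i ω - P.g i (S.x r i ω)) (S.G r j ω - P.g j (S.x r j ω)) : ℝ)) P.μ :=
    fun i j => MT_int_inner (MT_memℒp_noise S r i) (MT_memℒp_noise S r j)
  rw [integral_finset_sum _ (fun i _ => integrable_finset_sum _ (fun j _ => hint i j))]
  have hsum : ∀ i : Fin N, ∑ j, ∫ ω,
      (inner ℝ (S.G r i ω - P.g i (S.x r i ω)) (S.G r j ω - P.g j (S.x r j ω)) : ℝ) ∂P.μ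
      ≤ P.σ^2 := by
    intro i
    have heq : ∑ j, ∫ ω,
        (inner ℝ (S.G r i ω - P.g i (S.x r i ω)) (S.G r j ω - P.g j (S.x r j ω)) : ℝ) ∂P.μ
        = ∫ ω, (inner ℝ (S.G r i ω - P.g i (S.x r i ω)) (S.G r i ω - P.g i (S.x r i ω)) : ℝ) ∂P.μ := by
      refine Finset.sum_eq_single i (fun j _ hne => ?_) (by simp)
      exact S.horth r r i j (by simp [(Ne.symm hne)])
    rw [heq]
    have heq2 : ∫ ω, (inner ℝ (S.G r i ω - P.g i (S.x r i ω))
          (S.G r i ω - P.g i (S.x r i ω)) : ℝ) ∂P.μ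
        = ∫ ω, ‖S.G r i ω - P.g i (S.x r i ω)‖^2 ∂P.μ :=
      integral_congr_ae (Filter.Eventually.of_forall fun ω => real_inner_self_eq_norm_sq _)
    rw [heq2]
    exact S.hvar r i
  have hswap : ∀ i : Fin N, ∫ ω, ∑ j, (inner ℝ (S.G r i ω - P.g i (S.x r i ω))
      (S.G r j ω - P.g j (S.x r j ω)) : ℝ) ∂P.μ
      = ∑ j, ∫ ω, (inner ℝ (S.G r i ω - P.g i (S.x r i ω))
          (S.G r j ω - P.g j (S.x r j ω)) : ℝ) ∂P.μ :=
    fun i => integral_finset_sum _ (fun j _ => hint i j)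
  rw [Finset.sum_congr rfl (fun i _ => hswap i)]
  have htot : ∑ i, ∑ j, (∫ ω,
      (inner ℝ (S.G r i ω - P.g i (S.x r i ω)) (S.G r j ω - P.g j (S.x r j ω)) : ℝ) ∂P.μ)
      ≤ (N:ℝ) * P.σ^2 := by
    calc ∑ i, ∑ j, (∫ ω, (inner ℝ (S.G r i ω - P.g i (S.x r i ω))
          (S.G r j ω - P.g j (S.x r j ω)) : ℝ) ∂P.μ)
        ≤ ∑ _i : Fin N, P.σ^2 := Finset.sum_le_sum fun i _ => hsum i
      _ = (N:ℝ) * P.σ^2 := by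
          rw [Finset.sum_const, Finset.card_univ, Fintype.card_fin, nsmul_eq_mul]
  have hfin : ((N:ℝ)⁻¹)^2 * ((N:ℝ) * P.σ^2) = P.σ^2/N := by
    field_simp
  calc ((N:ℝ)⁻¹)^2 * ∑ i, ∑ j, (∫ ω, (inner ℝ (S.G r i ω - P.g i (S.x r i ω))
        (S.G r j ω - P.g j (S.x r j ω)) : ℝ) ∂P.μ)
      ≤ ((N:ℝ)⁻¹)^2 * ((N:ℝ) * P.σ^2) := mul_le_mul_of_nonneg_left htot (by positivity)
    _ = P.σ^2/N := hfin
end TrackingAux6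

end MTRun
namespace MTRun

section TrackingAux7

variable {N d : ℕ} {Ω : Type} [mΩ : MeasurableSpace Ω] {P : MTProblem N d Ω}

/-- Predictable part of `ū^{(r+1)}`. -/
def MT_afun (S : MTRun P) (r : ℕ) : Ω → EuclideanSpace ℝ (Fin d) := fun ω =>
  P.β • S.ubar r ω + (P.gradF (S.xbar r ω)
    + (N:ℝ)⁻¹ • ∑ i, (P.g i (S.x r i ω) - P.g i (S.xbar r ω)))

/-- Averaged noise. -/
def MT_nfun (S : MTRun P) (r : ℕ) : Ω → EuclideanSpace ℝ (Fin d) := fun ω =>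
  (N:ℝ)⁻¹ • ∑ i, (S.G r i ω - P.g i (S.x r i ω))

variable (S : MTRun P)

theorem MT_ubar_decomp (r : ℕ) (ω : Ω) :
    S.ubar (r+1) ω = MT_afun S r ω + MT_nfun S r ω := by
  simp only [MT_afun, MT_nfun]
  rw [MT_ubar_succ S r ω]
  have h1 : P.gradF (S.xbar r ω) = (N:ℝ)⁻¹ • ∑ i, P.g i (S.xbar r ω) := rfl
  rw [h1, Finset.sum_sub_distrib, Finset.sum_sub_distrib, smul_sub, smul_sub]
  abel

theorem MT_memℒp_afun (r : ℕ) : MemLp (MT_afun S r) 2 P.μ := by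
  haveI := P.prob
  refine ((MT_memℒp_ubar S r).const_smul (_ : ℝ)).add (((MT_memℒp_gradF_xbar S r)).add ?_)
  exact (memLp_finset_sum Finset.univ
    (fun i _ => (MT_memℒp_g_x S r i).sub (MT_memℒp_g_xbar S r i))).const_smul (_ : ℝ)

theorem MT_memℒp_nfun (r : ℕ) : MemLp (MT_nfun S r) 2 P.μ := by
  haveI := P.prob
  exact (memLp_finset_sum Finset.univ (fun i _ => MT_memℒp_noise S r i)).const_smul (_ : ℝ)

theorem MT_sm_afun (r : ℕ) : StronglyMeasurable[S.ℱ r] (MT_afun S r) := by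
  refine ((MT_sm_ubar S r).const_smul (_ : ℝ)).add
    ((((MT_cont_gradF P).comp_stronglyMeasurable (MT_sm_xbar S r))).add ?_)
  exact (Finset.stronglyMeasurable_fun_sum Finset.univ
    (fun i _ => ((MT_cont_g P i).comp_stronglyMeasurable (S.hadapted_x r i)).sub
      ((MT_cont_g P i).comp_stronglyMeasurable (MT_sm_xbar S r)))).const_smul (_ : ℝ)

theorem MT_cross_zero (r : ℕ) :
    ∫ ω, (inner ℝ (MT_afun S r ω) (MT_nfun S r ω) : ℝ) ∂P.μ = 0 := by
  haveI := P.prob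
  have hpt : ∀ ω, (inner ℝ (MT_afun S r ω) (MT_nfun S r ω) : ℝ)
      = (N:ℝ)⁻¹ * ∑ i, (inner ℝ (MT_afun S r ω) (S.G r i ω - P.g i (S.x r i ω)) : ℝ) := by
    intro ω
    simp only [MT_nfun]
    rw [real_inner_smul_right]
    congr 1
    exact inner_sum _ _ _
  rw [integral_congr_ae (Filter.Eventually.of_forall hpt), integral_const_mul,
    integral_finset_sum _ (fun i _ => MT_int_inner (MT_memℒp_afun S r) (MT_memℒp_noise S r i))]
  have hz : ∀ i : Fin N, ∫ ω,
      (inner ℝ (MT_afun S r ω) (S.G r i ω - P.g i (S.x r i ω)) : ℝ) ∂P.μ = 0 := by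
    intro i
    exact MT_integral_inner_eq_zero S.ℱ r (MT_sm_afun S r) (MT_memℒp_afun S r)
      (MT_memℒp_noise S r i) (MT_condexp_noise S r i)
  rw [Finset.sum_congr rfl (fun i _ => hz i)]
  simp

theorem MT_afun_bound (r : ℕ) :
    ∫ ω, ‖MT_afun S r ω‖^2 ∂P.μ
      ≤ 2*P.β^2 * ∫ ω, ‖S.ubar r ω‖^2 ∂P.μ
        + 4 * ∫ ω, ‖P.gradF (S.xbar r ω)‖^2 ∂P.μ
        + 4*P.L^2 * S.Xi r := by
  haveI := P.prob
  have hN0 : (0:ℝ) < N := by exact_mod_cast P.hN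
  have hpt : ∀ ω, ‖MT_afun S r ω‖^2
      ≤ 2*P.β^2*‖S.ubar r ω‖^2 + 4*‖P.gradF (S.xbar r ω)‖^2
        + 4*P.L^2*((N:ℝ)⁻¹ * ∑ i, ‖S.x r i ω - S.xbar r ω‖^2) := by
    intro ω
    have t1 := MT_sq_add_le (P.β • S.ubar r ω) (P.gradF (S.xbar r ω)
      + (N:ℝ)⁻¹ • ∑ i, (P.g i (S.x r i ω) - P.g i (S.xbar r ω)))
    have t2 := MT_sq_add_le (P.gradF (S.xbar r ω))
      ((N:ℝ)⁻¹ • ∑ i, (P.g i (S.x r i ω) - P.g i (S.xbar r ω)))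
    have t3 : ‖P.β • S.ubar r ω‖^2 = P.β^2 * ‖S.ubar r ω‖^2 := by
      rw [norm_smul, Real.norm_eq_abs, mul_pow, sq_abs]
    have hh : ‖(N:ℝ)⁻¹ • ∑ i, (P.g i (S.x r i ω) - P.g i (S.xbar r ω))‖^2
        ≤ P.L^2*((N:ℝ)⁻¹ * ∑ i, ‖S.x r i ω - S.xbar r ω‖^2) := by
      have hb : ‖(N:ℝ)⁻¹ • ∑ i, (P.g i (S.x r i ω) - P.g i (S.xbar r ω))‖
          ≤ (N:ℝ)⁻¹ * (P.L * ∑ i, ‖S.x r i ω - S.xbar r ω‖) := by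
        rw [norm_smul, Real.norm_eq_abs, abs_of_nonneg (inv_nonneg.mpr hN0.le)]
        refine mul_le_mul_of_nonneg_left ?_ (inv_nonneg.mpr hN0.le)
        calc ‖∑ i, (P.g i (S.x r i ω) - P.g i (S.xbar r ω))‖
            ≤ ∑ i, ‖P.g i (S.x r i ω) - P.g i (S.xbar r ω)‖ := norm_sum_le _ _
          _ ≤ ∑ i, P.L * ‖S.x r i ω - S.xbar r ω‖ :=
              Finset.sum_le_sum fun i _ => P.hsmooth i _ _
          _ = P.L * ∑ i, ‖S.x r i ω - S.xbar r ω‖ := by rw [Finset.mul_sum]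
      have h1 : ‖(N:ℝ)⁻¹ • ∑ i, (P.g i (S.x r i ω) - P.g i (S.xbar r ω))‖^2
          ≤ ((N:ℝ)⁻¹ * (P.L * ∑ i, ‖S.x r i ω - S.xbar r ω‖))^2 :=
        pow_le_pow_left₀ (norm_nonneg _) hb 2
      have h2 : (∑ i, ‖S.x r i ω - S.xbar r ω‖)^2
          ≤ (N:ℝ) * ∑ i, ‖S.x r i ω - S.xbar r ω‖^2 :=
        MT_sq_sum_le _
      have h3 : ((N:ℝ)⁻¹ * (P.L * ∑ i, ‖S.x r i ω - S.xbar r ω‖))^2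
          = ((N:ℝ)⁻¹)^2 * P.L^2 * (∑ i, ‖S.x r i ω - S.xbar r ω‖)^2 := by ring
      have h4 : ((N:ℝ)⁻¹)^2 * P.L^2 * (∑ i, ‖S.x r i ω - S.xbar r ω‖)^2
          ≤ ((N:ℝ)⁻¹)^2 * P.L^2 * ((N:ℝ) * ∑ i, ‖S.x r i ω - S.xbar r ω‖^2) :=
        mul_le_mul_of_nonneg_left h2 (by positivity)
      have h5 : ((N:ℝ)⁻¹)^2 * P.L^2 * ((N:ℝ) * ∑ i, ‖S.x r i ω - S.xbar r ω‖^2)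
          = P.L^2*((N:ℝ)⁻¹ * ∑ i, ‖S.x r i ω - S.xbar r ω‖^2) := by
        field_simp
      linarith only [h1, h3.le, h3.ge, h4, h5.le, h5.ge]
    simp only [MT_afun]
    linarith only [t1, t2, t3.le, t3.ge, hh]
  have hInt1 : Integrable (fun ω => ‖S.ubar r ω‖^2) P.μ := MT_int_normsq (MT_memℒp_ubar S r)
  have hInt2 : Integrable (fun ω => ‖P.gradF (S.xbar r ω)‖^2) P.μ :=
    MT_int_normsq (MT_memℒp_gradF_xbar S r)
  have hInt3 : Integrable (fun ω => ∑ i, ‖S.x r i ω - S.xbar r ω‖^2) P.μ :=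
    integrable_finset_sum _ (fun i _ =>
      MT_int_normsq (((MT_memℒp_xuc S r).1 i).sub (MT_memℒp_xbar S r)))
  have hI1 : Integrable (fun ω => 2*P.β^2*‖S.ubar r ω‖^2) P.μ := by
    exact hInt1.const_mul _
  have hI2 : Integrable (fun ω => 4*‖P.gradF (S.xbar r ω)‖^2) P.μ := by
    exact hInt2.const_mul _
  have hI12 : Integrable (fun ω => 2*P.β^2*‖S.ubar r ω‖^2 + 4*‖P.gradF (S.xbar r ω)‖^2) P.μ := by
    exact hI1.add hI2
  have hI3 : Integrable
      (fun ω => 4*P.L^2*((N:ℝ)⁻¹ * ∑ i, ‖S.x r i ω - S.xbar r ω‖^2)) P.μ := by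
    exact (hInt3.const_mul _).const_mul _
  have hmono := integral_mono_of_nonneg
    (Filter.Eventually.of_forall (fun ω => sq_nonneg ‖MT_afun S r ω‖))
    (by exact hI12.add hI3)
    (Filter.Eventually.of_forall hpt)
  rw [integral_add hI12 hI3, integral_add hI1 hI2,
    integral_const_mul, integral_const_mul, integral_const_mul, integral_const_mul] at hmono
  calc ∫ ω, ‖MT_afun S r ω‖^2 ∂P.μ
      ≤ 2*P.β^2 * ∫ ω, ‖S.ubar r ω‖^2 ∂P.μ + 4 * ∫ ω, ‖P.gradF (S.xbar r ω)‖^2 ∂P.μ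
        + 4*P.L^2 * ((N:ℝ)⁻¹ * ∫ ω, (∑ i, ‖S.x r i ω - S.xbar r ω‖^2) ∂P.μ) := hmono
    _ = _ := by rw [MTRun.Xi]

theorem MT_ubar_sq_bound (r : ℕ) :
    ∫ ω, ‖S.ubar (r+1) ω‖^2 ∂P.μ
      ≤ 2*P.β^2 * ∫ ω, ‖S.ubar r ω‖^2 ∂P.μ
        + 4 * ∫ ω, ‖P.gradF (S.xbar r ω)‖^2 ∂P.μ
        + 4*P.L^2 * S.Xi r + P.σ^2/N := by
  haveI := P.prob
  have h0 : ∫ ω, ‖S.ubar (r+1) ω‖^2 ∂P.μ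
      = ∫ ω, ‖MT_afun S r ω + MT_nfun S r ω‖^2 ∂P.μ :=
    integral_congr_ae (Filter.Eventually.of_forall fun ω =>
      congrArg (fun z => ‖z‖^2) (MT_ubar_decomp S r ω))
  have hIa : Integrable (fun ω => ‖MT_afun S r ω‖^2) P.μ := MT_int_normsq (MT_memℒp_afun S r)
  have hIn : Integrable (fun ω => ‖MT_nfun S r ω‖^2) P.μ := MT_int_normsq (MT_memℒp_nfun S r)
  have hIc : Integrable (fun ω => 2 * (inner ℝ (MT_afun S r ω) (MT_nfun S r ω) : ℝ)) P.μ :=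
    (MT_int_inner (MT_memℒp_afun S r) (MT_memℒp_nfun S r)).const_mul 2
  have h1 : ∫ ω, ‖MT_afun S r ω + MT_nfun S r ω‖^2 ∂P.μ
      = ∫ ω, (‖MT_afun S r ω‖^2 + 2 * (inner ℝ (MT_afun S r ω) (MT_nfun S r ω) : ℝ)
          + ‖MT_nfun S r ω‖^2) ∂P.μ :=
    integral_congr_ae (Filter.Eventually.of_forall fun ω => norm_add_sq_real _ _)
  have hIac : Integrable (fun ω => ‖MT_afun S r ω‖^2
      + 2 * (inner ℝ (MT_afun S r ω) (MT_nfun S r ω) : ℝ)) P.μ := by exact hIa.add hIc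
  rw [h0, h1, integral_add hIac hIn, integral_add hIa hIc, integral_const_mul,
    MT_cross_zero S r]
  have h2 : ∫ ω, ‖MT_nfun S r ω‖^2 ∂P.μ ≤ P.σ^2/N := by
    have := MT_var_avg S r
    simpa [MT_nfun] using this
  have h3 := MT_afun_bound S r
  linarith only [h2, h3]

end TrackingAux7

end MTRun
namespace MTRun

section TrackingAux8

variable {N d : ℕ} {Ω : Type} [mΩ : MeasurableSpace Ω] {P : MTProblem N d Ω} (S : MTRun P)

theorem MT_EE_step (r : ℕ) :
    S.EE (r+1) ≤ (1 - P.p/2) * S.EE r + 18*P.β^2/P.p * S.DD r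
      + 24/((N:ℝ)*P.p) * ∫ ω, (∑ i, ‖S.u (r+1) i ω - S.dseq (r+1) i ω‖^2) ∂P.μ
      + 36*P.L^2/P.p * ∫ ω, ‖S.xbar (r+1) ω - S.xbar r ω‖^2 ∂P.μ := by
  haveI := P.prob
  have hNne : (N:ℝ) ≠ 0 := MT_hNne P
  have hp0 := P.hp0
  have hIA : Integrable
      (fun ω => ∑ i, ‖S.dseq (r+1) i ω - S.c r i ω - S.eseq (r+1) i ω‖^2) P.μ :=
    integrable_finset_sum _ fun i _ => MT_int_normsq
      (((MT_memℒp_dseq S (r+1) i).sub ((MT_memℒp_xuc S r).2.2 i)).sub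
        (MT_memℒp_eseq S (r+1) i))
  have hIδ : Integrable (fun ω =>
      ∑ i, ‖S.dseq (r+1) i ω - S.dseq r i ω - S.eseq (r+1) i ω + S.eseq r i ω‖^2) P.μ :=
    integrable_finset_sum _ fun i _ => MT_int_normsq
      ((((MT_memℒp_dseq S (r+1) i).sub (MT_memℒp_dseq S r i)).sub
        (MT_memℒp_eseq S (r+1) i)).add (MT_memℒp_eseq S r i))
  have hIs : Integrable (fun ω => ∑ i, ‖S.u (r+1) i ω - S.dseq (r+1) i ω‖^2) P.μ :=
    integrable_finset_sum _ fun i _ => MT_int_normsq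
      (((MT_memℒp_xuc S (r+1)).2.1 i).sub (MT_memℒp_dseq S (r+1) i))
  have hIX : Integrable (fun ω => ‖S.xbar (r+1) ω - S.xbar r ω‖^2) P.μ :=
    MT_int_normsq ((MT_memℒp_xbar S (r+1)).sub (MT_memℒp_xbar S r))
  have hJ1 : Integrable (fun ω =>
      (1 - P.p/2) * ∑ i, ‖S.dseq (r+1) i ω - S.c r i ω - S.eseq (r+1) i ω‖^2) P.μ := by
    exact hIA.const_mul _
  have hJ2 : Integrable (fun ω => (18*P.β^2/P.p) *
      ∑ i, ‖S.dseq (r+1) i ω - S.dseq r i ω - S.eseq (r+1) i ω + S.eseq r i ω‖^2) P.μ := by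
    exact hIδ.const_mul _
  have hJ3 : Integrable (fun ω =>
      (24/P.p) * ∑ i, ‖S.u (r+1) i ω - S.dseq (r+1) i ω‖^2) P.μ := by
    exact hIs.const_mul _
  have hJ4 : Integrable (fun ω =>
      (36*(N:ℝ)*P.L^2/P.p) * ‖S.xbar (r+1) ω - S.xbar r ω‖^2) P.μ := by
    exact hIX.const_mul _
  have hJ12 : Integrable (fun ω =>
      (1 - P.p/2) * ∑ i, ‖S.dseq (r+1) i ω - S.c r i ω - S.eseq (r+1) i ω‖^2
      + (18*P.β^2/P.p) *
        ∑ i, ‖S.dseq (r+1) i ω - S.dseq r i ω - S.eseq (r+1) i ω + S.eseq r i ω‖^2) P.μ := by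
    exact hJ1.add hJ2
  have hJ123 : Integrable (fun ω =>
      ((1 - P.p/2) * ∑ i, ‖S.dseq (r+1) i ω - S.c r i ω - S.eseq (r+1) i ω‖^2
      + (18*P.β^2/P.p) *
        ∑ i, ‖S.dseq (r+1) i ω - S.dseq r i ω - S.eseq (r+1) i ω + S.eseq r i ω‖^2)
      + (24/P.p) * ∑ i, ‖S.u (r+1) i ω - S.dseq (r+1) i ω‖^2) P.μ := by
    exact hJ12.add hJ3
  have hmono := integral_mono_of_nonneg
    (Filter.Eventually.of_forall (fun ω =>
      Finset.sum_nonneg fun i _ => sq_nonneg _))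
    (by exact hJ123.add hJ4)
    (Filter.Eventually.of_forall (fun ω => MT_key_pointwise S r ω))
  rw [integral_add hJ123 hJ4, integral_add hJ12 hJ3, integral_add hJ1 hJ2,
    integral_const_mul, integral_const_mul, integral_const_mul, integral_const_mul] at hmono
  have hstep : S.EE (r+1) ≤ (N:ℝ)⁻¹ *
      ((1 - P.p/2) * ∫ ω, (∑ i, ‖S.dseq (r+1) i ω - S.c r i ω - S.eseq (r+1) i ω‖^2) ∂P.μ
        + 18*P.β^2/P.p *
          ∫ ω, (∑ i, ‖S.dseq (r+1) i ω - S.dseq r i ω - S.eseq (r+1) i ω + S.eseq r i ω‖^2) ∂P.μ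
        + 24/P.p * ∫ ω, (∑ i, ‖S.u (r+1) i ω - S.dseq (r+1) i ω‖^2) ∂P.μ
        + 36*(N:ℝ)*P.L^2/P.p * ∫ ω, ‖S.xbar (r+1) ω - S.xbar r ω‖^2 ∂P.μ) := by
    have hEE : S.EE (r+1) = (N:ℝ)⁻¹ *
        ∫ ω, (∑ i, ‖S.dseq (r+1+1) i ω - S.c (r+1) i ω - S.eseq (r+1+1) i ω‖^2) ∂P.μ := rfl
    rw [hEE]
    exact mul_le_mul_of_nonneg_left hmono (inv_nonneg.mpr (by positivity))
  refine hstep.trans_eq ?_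
  simp only [MTRun.EE, MTRun.DD]
  field_simp

end TrackingAux8

end MTRun
/-- **Lemma** (recursion for the tracking error `ℰ`): for every round `r ≥ 0`,
`ℰ^{(r+1)} ≤ (1 − p/2) ℰ^{(r)} + (18β²/p) 𝒟^{(r)} + (24/(Np)) E‖U^{(r+1)} − D^{(r+1)}‖_F²
  + (144L⁴/p)η² Ξ^{(r)} + (72β²L²/p)η² E‖ū^{(r)}‖² + (144L²/p)η² E‖∇f(x̄^{(r)})‖²
  + 36L²σ²η²/(Np)`. -/
theorem tracking_error_recursion
    (N d : ℕ) (Ω : Type) [mΩ : MeasurableSpace Ω]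
    (P : MTProblem N d Ω) (S : MTRun P) :
    ∀ r : ℕ,
      S.EE (r + 1) ≤
        (1 - P.p / 2) * S.EE r
          + 18 * P.β ^ 2 / P.p * S.DD r
          + 24 / ((N : ℝ) * P.p) *
              ∫ ω, (∑ i, ‖S.u (r + 1) i ω - S.dseq (r + 1) i ω‖ ^ 2) ∂P.μ
          + 144 * P.L ^ 4 / P.p * S.η ^ 2 * S.Xi r
          + 72 * P.β ^ 2 * P.L ^ 2 / P.p * S.η ^ 2 * ∫ ω, ‖S.ubar r ω‖ ^ 2 ∂P.μ
          + 144 * P.L ^ 2 / P.p * S.η ^ 2 * ∫ ω, ‖P.gradF (S.xbar r ω)‖ ^ 2 ∂P.μ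
          + 36 * P.L ^ 2 * P.σ ^ 2 * S.η ^ 2 / ((N : ℝ) * P.p) := by
  intro r
  haveI := P.prob
  have h1 := MTRun.MT_EE_step S r
  have h2 : ∫ ω, ‖S.xbar (r+1) ω - S.xbar r ω‖^2 ∂P.μ
      = S.η^2 * ∫ ω, ‖S.ubar (r+1) ω‖^2 ∂P.μ := by
    rw [← integral_const_mul]
    refine integral_congr_ae (Filter.Eventually.of_forall fun ω => ?_)
    show ‖S.xbar (r+1) ω - S.xbar r ω‖^2 = S.η^2 * ‖S.ubar (r+1) ω‖^2
    rw [MTRun.MT_xbar_succ S r ω]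
    have h : S.xbar r ω - S.η • S.ubar (r+1) ω - S.xbar r ω
        = -(S.η • S.ubar (r+1) ω) := by abel
    rw [h, norm_neg, norm_smul, mul_pow, Real.norm_eq_abs, sq_abs]
  have h3 := MTRun.MT_ubar_sq_bound S r
  have hc : (0:ℝ) ≤ 36*P.L^2/P.p := div_nonneg (by positivity) P.hp0.le
  have h5 : 36*P.L^2/P.p * ∫ ω, ‖S.xbar (r+1) ω - S.xbar r ω‖^2 ∂P.μ
      ≤ 36*P.L^2/P.p * (S.η^2 * (2*P.β^2 * ∫ ω, ‖S.ubar r ω‖^2 ∂P.μ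
          + 4 * ∫ ω, ‖P.gradF (S.xbar r ω)‖^2 ∂P.μ + 4*P.L^2 * S.Xi r + P.σ^2/(N:ℝ))) := by
    rw [h2]
    exact mul_le_mul_of_nonneg_left (mul_le_mul_of_nonneg_left h3 (sq_nonneg _)) hc
  have hexp : 36*P.L^2/P.p * (S.η^2 * (2*P.β^2 * ∫ ω, ‖S.ubar r ω‖^2 ∂P.μ
          + 4 * ∫ ω, ‖P.gradF (S.xbar r ω)‖^2 ∂P.μ + 4*P.L^2 * S.Xi r + P.σ^2/(N:ℝ)))
      = 144 * P.L ^ 4 / P.p * S.η ^ 2 * S.Xi r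
        + 72 * P.β ^ 2 * P.L ^ 2 / P.p * S.η ^ 2 * ∫ ω, ‖S.ubar r ω‖ ^ 2 ∂P.μ
        + 144 * P.L ^ 2 / P.p * S.η ^ 2 * ∫ ω, ‖P.gradF (S.xbar r ω)‖ ^ 2 ∂P.μ
        + 36 * P.L ^ 2 * P.σ ^ 2 * S.η ^ 2 / ((N : ℝ) * P.p) := by
    have hNne : (N:ℝ) ≠ 0 := MTRun.MT_hNne P
    have hpne := P.hp0.ne'
    field_simp
    ring
  linarith only [h1, h5, hexp.le, hexp.ge]

end
end
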